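/- Let t = (t_{i,j,k})_{1 ≤ i < j < k ≤ n} be a family of integers such that the normal form map N_t : ℤ^n → G(t) is bijective. Then for all 1 ≤ i < j ≤ n there exist polynomials R_{i,j,k} ∈ ℚ[u, v] for j < k ≤ n such that R_{i,j,k}(u, v) ∈ ℤ for all u, v ∈ ℤ and, for all u, v ∈ ℤ, the equation a_j^u · a_i^v = a_i^v · a_j^u · a_{j+1}^{R_{i,j,j+1}(u,v)} ⋯ a_n^{R_{i,j,n}(u,v)} holds in G(t). -/

import Mathlib

namespace HallPoly

/-- The ordered product `g_1^{e_1} ⋯ g_n^{e_n}` taken in increasing order of indices. -/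
def prodPow {Γ : Type*} [Group Γ] (n : ℕ) (g : Fin n → Γ) (e : Fin n → ℤ) : Γ :=
  ((List.finRange n).map fun k => g k ^ e k).prod

/-- The relators of the presented group `G(t)`:
`(a_i · a_j · a_{j+1}^{t_{i,j,j+1}} ⋯ a_n^{t_{i,j,n}})⁻¹ · (a_j · a_i)` for `1 ≤ i < j ≤ n`. -/
def rels (n : ℕ) (t : Fin n → Fin n → Fin n → ℤ) : Set (FreeGroup (Fin n)) :=
  { r | ∃ i j : Fin n, i < j ∧
      r = (FreeGroup.of i * FreeGroup.of j *
            prodPow n FreeGroup.of (fun k => if j < k then t i j k else 0))⁻¹ *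
          (FreeGroup.of j * FreeGroup.of i) }

/-- The presented group `G(t)` with generators `a_1, …, a_n` and relations
`a_j·a_i = a_i·a_j·a_{j+1}^{t_{i,j,j+1}} ⋯ a_n^{t_{i,j,n}}` for `1 ≤ i < j ≤ n`. -/
abbrev G (n : ℕ) (t : Fin n → Fin n → Fin n → ℤ) : Type := PresentedGroup (rels n t)

/-- The generators `a_1, …, a_n` of `G(t)`. -/
def a (n : ℕ) (t : Fin n → Fin n → Fin n → ℤ) (i : Fin n) : G n t :=
  PresentedGroup.of i

/-- The normal form map `N_t : ℤⁿ → G(t)`, `x ↦ a_1^{x_1} ⋯ a_n^{x_n}`. -/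
def N (n : ℕ) (t : Fin n → Fin n → Fin n → ℤ) (x : Fin n → ℤ) : G n t :=
  prodPow n (a n t) x



/-! ### Support predicates -/

/-- All coordinates `< m` vanish. -/
def SuppGe (n m : ℕ) (x : Fin n → ℤ) : Prop := ∀ k : Fin n, (k : ℕ) < m → x k = 0
/-- All coordinates `≥ m` vanish. -/
def SuppLt (n m : ℕ) (x : Fin n → ℤ) : Prop := ∀ k : Fin n, m ≤ (k : ℕ) → x k = 0

def lowPart (n m : ℕ) (x : Fin n → ℤ) : Fin n → ℤ := fun k => if (k : ℕ) < m then x k else 0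
def highPart (n m : ℕ) (x : Fin n → ℤ) : Fin n → ℤ := fun k => if m ≤ (k : ℕ) then x k else 0
def sing (n : ℕ) (k₀ : Fin n) (w : ℤ) : Fin n → ℤ := fun k => if k = k₀ then w else 0
def eraseF (n : ℕ) (k₀ : Fin n) (x : Fin n → ℤ) : Fin n → ℤ := fun k => if k = k₀ then 0 else x k

lemma suppLt_lowPart (n m : ℕ) (x : Fin n → ℤ) : SuppLt n m (lowPart n m x) := by
  intro k hk; simp [lowPart, Nat.not_lt.mpr hk]

lemma suppGe_highPart (n m : ℕ) (x : Fin n → ℤ) : SuppGe n m (highPart n m x) := by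
  intro k hk; simp [highPart, Nat.not_le.mpr hk]

lemma suppLt_sing (n : ℕ) (k₀ : Fin n) (w : ℤ) : SuppLt n ((k₀ : ℕ) + 1) (sing n k₀ w) := by
  intro k hk
  have : k ≠ k₀ := by intro h; subst h; omega
  simp [sing, this]

lemma suppGe_sing (n m : ℕ) (k₀ : Fin n) (w : ℤ) (h : m ≤ (k₀ : ℕ)) :
    SuppGe n m (sing n k₀ w) := by
  intro k hk
  have : k ≠ k₀ := by intro hh; subst hh; omega
  simp [sing, this]

lemma suppGe_eraseF (n : ℕ) (k₀ : Fin n) (x : Fin n → ℤ) (hx : SuppGe n (k₀ : ℕ) x) :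
    SuppGe n ((k₀ : ℕ) + 1) (eraseF n k₀ x) := by
  intro k hk
  by_cases h : k = k₀
  · simp [eraseF, h]
  · have : (k : ℕ) < (k₀ : ℕ) := by
      rcases Nat.lt_or_ge (k : ℕ) (k₀ : ℕ) with h' | h'
      · exact h'
      · exfalso; exact h (Fin.ext (by omega))
    simp [eraseF, h, hx k this]

lemma sing_add_eraseF (n : ℕ) (k₀ : Fin n) (x : Fin n → ℤ) :
    sing n k₀ (x k₀) + eraseF n k₀ x = x := by
  funext k
  by_cases h : k = k₀ <;> simp [sing, eraseF, h]

/-! ### Splitting ordered products -/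

section ProdPow

variable {Γ : Type*} [Group Γ] (n : ℕ) (g : Fin n → Γ)

lemma mem_take_finRange {m : ℕ} {k : Fin n} (h : k ∈ (List.finRange n).take m) : (k : ℕ) < m := by
  obtain ⟨i, hi, hk⟩ := List.mem_iff_getElem.mp h
  have hlen : ((List.finRange n).take m).length = min m n := by simp
  rw [List.getElem_take] at hk
  have hval : (k : ℕ) = i := by rw [← hk]; simp [List.getElem_finRange]
  omega

lemma mem_drop_finRange {m : ℕ} {k : Fin n} (h : k ∈ (List.finRange n).drop m) : m ≤ (k : ℕ) := by
  obtain ⟨i, hi, hk⟩ := List.mem_iff_getElem.mp h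
  rw [List.getElem_drop] at hk
  have hval : (k : ℕ) = m + i := by rw [← hk]; simp [List.getElem_finRange]
  omega

lemma prodPow_split (m : ℕ) (e : Fin n → ℤ) :
    prodPow n g e
      = ((List.finRange n).take m |>.map fun k => g k ^ e k).prod
        * ((List.finRange n).drop m |>.map fun k => g k ^ e k).prod := by
  rw [prodPow, ← List.prod_append, ← List.map_append, List.take_append_drop]

lemma prod_take_congr (m : ℕ) (e e' : Fin n → ℤ) (h : ∀ k : Fin n, (k : ℕ) < m → e k = e' k) :
    ((List.finRange n).take m |>.map fun k => g k ^ e k).prod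
      = ((List.finRange n).take m |>.map fun k => g k ^ e' k).prod := by
  congr 1
  apply List.map_congr_left
  intro k hk
  rw [h k (mem_take_finRange n hk)]

lemma prod_drop_congr (m : ℕ) (e e' : Fin n → ℤ) (h : ∀ k : Fin n, m ≤ (k : ℕ) → e k = e' k) :
    ((List.finRange n).drop m |>.map fun k => g k ^ e k).prod
      = ((List.finRange n).drop m |>.map fun k => g k ^ e' k).prod := by
  congr 1
  apply List.map_congr_left
  intro k hk
  rw [h k (mem_drop_finRange n hk)]

lemma prod_take_one (m : ℕ) (e : Fin n → ℤ) (h : ∀ k : Fin n, (k : ℕ) < m → e k = 0) :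
    ((List.finRange n).take m |>.map fun k => g k ^ e k).prod = 1 := by
  apply List.prod_eq_one
  intro x hx
  obtain ⟨k, hk, rfl⟩ := List.mem_map.mp hx
  rw [h k (mem_take_finRange n hk), zpow_zero]

lemma prod_drop_one (m : ℕ) (e : Fin n → ℤ) (h : ∀ k : Fin n, m ≤ (k : ℕ) → e k = 0) :
    ((List.finRange n).drop m |>.map fun k => g k ^ e k).prod = 1 := by
  apply List.prod_eq_one
  intro x hx
  obtain ⟨k, hk, rfl⟩ := List.mem_map.mp hx
  rw [h k (mem_drop_finRange n hk), zpow_zero]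

lemma prodPow_zero : prodPow n g (fun _ => 0) = 1 := by
  apply List.prod_eq_one
  intro x hx
  obtain ⟨k, _, rfl⟩ := List.mem_map.mp hx
  exact zpow_zero _

lemma prodPow_low_high (m : ℕ) (e : Fin n → ℤ) :
    prodPow n g e = prodPow n g (lowPart n m e) * prodPow n g (highPart n m e) := by
  rw [prodPow_split n g m e, prodPow_split n g m (lowPart n m e),
    prodPow_split n g m (highPart n m e)]
  rw [prod_take_one n g m (highPart n m e) (fun k hk => by simp [highPart, Nat.not_le.mpr hk]),
    prod_drop_one n g m (lowPart n m e) (fun k hk => by simp [lowPart, Nat.not_lt.mpr hk]),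
    prod_take_congr n g m (lowPart n m e) e (fun k hk => by simp [lowPart, hk]),
    prod_drop_congr n g m (highPart n m e) e (fun k hk => by simp [highPart, hk])]
  group

lemma prodPow_add_split (m : ℕ) (x y : Fin n → ℤ) (hx : SuppLt n m x) (hy : SuppGe n m y) :
    prodPow n g (x + y) = prodPow n g x * prodPow n g y := by
  have hl : lowPart n m (x + y) = x := by
    funext k
    by_cases hk : (k : ℕ) < m
    · simp [lowPart, hk, hy k hk]
    · simp [lowPart, hk, hx k (Nat.not_lt.mp hk)]
  have hh : highPart n m (x + y) = y := by
    funext k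
    by_cases hk : m ≤ (k : ℕ)
    · simp [highPart, hk, hx k hk]
    · simp [highPart, hk, hy k (Nat.not_le.mp hk)]
  rw [prodPow_low_high n g m (x + y), hl, hh]

lemma prodPow_sing (k₀ : Fin n) (w : ℤ) : prodPow n g (sing n k₀ w) = g k₀ ^ w := by
  rw [prodPow]
  have := List.prod_map_eq_pow_single (l := List.finRange n) k₀ (fun k => g k ^ sing n k₀ w k)
    (fun k hk _ => by simp [sing, hk])
  rw [this]
  have hc : (List.finRange n).count k₀ = 1 :=
    List.count_eq_one_of_mem (List.nodup_finRange n) (List.mem_finRange k₀)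
  rw [hc, pow_one]
  simp [sing]

lemma hom_prodPow {Δ : Type*} [Group Δ] (φ : Γ →* Δ) (e : Fin n → ℤ) :
    φ (prodPow n g e) = prodPow n (fun k => φ (g k)) e := by
  rw [prodPow, prodPow, map_list_prod, List.map_map]
  congr 1
  apply List.map_congr_left
  intro k _
  simp

end ProdPow


/-! ### Relations in `G n t` -/

section Relations

variable (n : ℕ) (t : Fin n → Fin n → Fin n → ℤ)

/-- The tail of the commutation relation. -/
def tail (i j : Fin n) : Fin n → ℤ := fun k => if j < k then t i j k else 0

lemma suppGe_tail (i j : Fin n) : SuppGe n ((j : ℕ) + 1) (tail n t i j) := by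
  intro k hk
  have : ¬ j < k := by
    rw [Fin.lt_def]; omega
  simp [tail, this]

lemma presented_mk_eq_one {r : FreeGroup (Fin n)} (hr : r ∈ rels n t) :
    (QuotientGroup.mk' (Subgroup.normalClosure (rels n t)) r : G n t) = 1 := by
  rw [QuotientGroup.mk'_apply, QuotientGroup.eq_one_iff]
  exact Subgroup.subset_normalClosure hr

lemma mk_of (i : Fin n) :
    (QuotientGroup.mk' (Subgroup.normalClosure (rels n t)) (FreeGroup.of i) : G n t)
      = a n t i := rfl

lemma rel (i j : Fin n) (h : i < j) :
    a n t j * a n t i = a n t i * a n t j * N n t (tail n t i j) := by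
  have h1 := presented_mk_eq_one n t (r := (FreeGroup.of i * FreeGroup.of j *
      prodPow n FreeGroup.of (fun k => if j < k then t i j k else 0))⁻¹ *
      (FreeGroup.of j * FreeGroup.of i)) ⟨i, j, h, rfl⟩
  set φ := QuotientGroup.mk' (Subgroup.normalClosure (rels n t))
  rw [map_mul, map_inv, map_mul, map_mul, map_mul] at h1
  have h2 : φ (prodPow n FreeGroup.of (fun k => if j < k then t i j k else 0))
      = N n t (tail n t i j) := by
    rw [hom_prodPow]
    rfl
  rw [h2, mk_of, mk_of] at h1
  have h3 : (a n t i * a n t j * N n t (tail n t i j))⁻¹ * (a n t j * a n t i) = 1 := h1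
  rw [inv_mul_eq_one] at h3
  exact h3.symm

lemma conj1 {i j : Fin n} (h : i < j) :
    (a n t i)⁻¹ * a n t j * a n t i = a n t j * N n t (tail n t i j) := by
  rw [mul_assoc, rel n t i j h]
  group

lemma conj2 {i j : Fin n} (h : i < j) :
    a n t i * a n t j * (a n t i)⁻¹
      = a n t j * (a n t i * (N n t (tail n t i j))⁻¹ * (a n t i)⁻¹) := by
  have hr := rel n t i j h
  calc a n t i * a n t j * (a n t i)⁻¹
      = (a n t i * a n t j * N n t (tail n t i j)) * (N n t (tail n t i j))⁻¹ * (a n t i)⁻¹ := by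
        group
    _ = (a n t j * a n t i) * (N n t (tail n t i j))⁻¹ * (a n t i)⁻¹ := by rw [← hr]
    _ = a n t j * (a n t i * (N n t (tail n t i j))⁻¹ * (a n t i)⁻¹) := by group

/-! ### The subgroups `H m` -/

/-- The subgroup generated by the generators of index `≥ m`. -/
def H (m : ℕ) : Subgroup (G n t) :=
  Subgroup.closure {x | ∃ k : Fin n, m ≤ (k : ℕ) ∧ x = a n t k}

lemma a_mem_H {m : ℕ} {k : Fin n} (h : m ≤ (k : ℕ)) : a n t k ∈ H n t m :=
  Subgroup.subset_closure ⟨k, h, rfl⟩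

lemma N_mem_H {m : ℕ} {x : Fin n → ℤ} (hx : SuppGe n m x) : N n t x ∈ H n t m := by
  apply Subgroup.list_prod_mem
  intro g hg
  obtain ⟨k, _, rfl⟩ := List.mem_map.mp hg
  by_cases h : m ≤ (k : ℕ)
  · exact Subgroup.zpow_mem _ (a_mem_H n t h) _
  · rw [hx k (Nat.not_le.mp h), zpow_zero]
    exact Subgroup.one_mem _

lemma H_le {m m' : ℕ} (h : m' ≤ m) : H n t m ≤ H n t m' := by
  apply Subgroup.closure_mono
  rintro x ⟨k, hk, rfl⟩
  exact ⟨k, le_trans h hk, rfl⟩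

lemma H_eq_bot {m : ℕ} (h : n ≤ m) : H n t m = ⊥ := by
  have : {x | ∃ k : Fin n, m ≤ (k : ℕ) ∧ x = a n t k} = ∅ := by
    ext x
    simp only [Set.mem_setOf_eq, Set.mem_empty_iff_false, iff_false]
    rintro ⟨k, hk, _⟩
    have := k.isLt
    omega
  rw [H, this, Subgroup.closure_empty]

lemma G_gen : Subgroup.closure (Set.range (a n t)) = (⊤ : Subgroup (G n t)) := by
  have key : ∀ g : G n t, g ∈ Subgroup.closure (Set.range (a n t)) := by
    intro g
    obtain ⟨w, rfl⟩ := QuotientGroup.mk'_surjective (Subgroup.normalClosure (rels n t)) g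
    induction w using FreeGroup.induction_on with
    | C1 => exact Subgroup.one_mem _
    | of i => exact Subgroup.subset_closure ⟨i, rfl⟩
    | inv_of i ih => exact Subgroup.inv_mem _ ih
    | mul w₁ w₂ ih₁ ih₂ => exact Subgroup.mul_mem _ ih₁ ih₂
  rw [eq_top_iff]
  exact fun g _ => key g

end Relations

section NF

variable (n : ℕ) (t : Fin n → Fin n → Fin n → ℤ)

lemma N_add_split (m : ℕ) (x y : Fin n → ℤ) (hx : SuppLt n m x) (hy : SuppGe n m y) :
    N n t (x + y) = N n t x * N n t y := prodPow_add_split n (a n t) m x y hx hy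

lemma N_sing (k : Fin n) (w : ℤ) : N n t (sing n k w) = a n t k ^ w :=
  prodPow_sing n (a n t) k w

lemma N_zero : N n t (fun _ => 0) = 1 := prodPow_zero n (a n t)

lemma N_decomp (μ : Fin n) (x : Fin n → ℤ) (hx : SuppGe n (μ : ℕ) x) :
    N n t x = a n t μ ^ (x μ) * N n t (eraseF n μ x) := by
  conv_lhs => rw [← sing_add_eraseF n μ x]
  rw [N_add_split n t ((μ : ℕ)+1) _ _ (suppLt_sing n μ (x μ)) (suppGe_eraseF n μ x hx),
    N_sing]

lemma conj_gen_mem (p k : Fin n) (m : ℕ) (hk : m ≤ (k : ℕ))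
    (IH : ∀ m', m < m' → (H n t m').Normal) :
    a n t p * a n t k * (a n t p)⁻¹ ∈ H n t m ∧ (a n t p)⁻¹ * a n t k * a n t p ∈ H n t m := by
  rcases lt_trichotomy p k with hpk | rfl | hkp
  · have hτ : N n t (tail n t p k) ∈ H n t ((k : ℕ)+1) := N_mem_H n t (suppGe_tail n t p k)
    have hnorm : (H n t ((k : ℕ)+1)).Normal := IH _ (by omega)
    constructor
    · rw [conj2 n t hpk]
      exact Subgroup.mul_mem _ (a_mem_H n t hk)
        (H_le n t (by omega) (hnorm.conj_mem _ (Subgroup.inv_mem _ hτ) _))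
    · rw [conj1 n t hpk]
      exact Subgroup.mul_mem _ (a_mem_H n t hk) (H_le n t (by omega) hτ)
  · have h1 : a n t p * a n t p * (a n t p)⁻¹ = a n t p := by group
    have h2 : (a n t p)⁻¹ * a n t p * a n t p = a n t p := by group
    rw [h1, h2]
    exact ⟨a_mem_H n t hk, a_mem_H n t hk⟩
  · -- k < p
    have hr := rel n t k p hkp
    have hτ : N n t (tail n t k p) ∈ H n t ((p : ℕ)+1) := N_mem_H n t (suppGe_tail n t k p)
    have hnorm : (H n t ((p : ℕ)+1)).Normal := IH _ (by omega)
    have hple : H n t ((p : ℕ)+1) ≤ H n t m := H_le n t (by omega)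
    constructor
    · have e : a n t p * a n t k * (a n t p)⁻¹
          = a n t k * (a n t p * N n t (tail n t k p) * (a n t p)⁻¹) := by
        calc a n t p * a n t k * (a n t p)⁻¹
            = (a n t p * a n t k) * (a n t p)⁻¹ := by group
          _ = (a n t k * a n t p * N n t (tail n t k p)) * (a n t p)⁻¹ := by rw [hr]
          _ = a n t k * (a n t p * N n t (tail n t k p) * (a n t p)⁻¹) := by group
      rw [e]
      exact Subgroup.mul_mem _ (a_mem_H n t (by omega))
        (hple (hnorm.conj_mem _ hτ _))
    · have e : (a n t p)⁻¹ * a n t k * a n t p = a n t k * (N n t (tail n t k p))⁻¹ := by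
        calc (a n t p)⁻¹ * a n t k * a n t p
            = (a n t p)⁻¹ * (a n t k * a n t p * N n t (tail n t k p))
              * (N n t (tail n t k p))⁻¹ := by group
          _ = (a n t p)⁻¹ * (a n t p * a n t k) * (N n t (tail n t k p))⁻¹ := by rw [← hr]
          _ = a n t k * (N n t (tail n t k p))⁻¹ := by group
      rw [e]
      exact Subgroup.mul_mem _ (a_mem_H n t (by omega)) (hple (Subgroup.inv_mem _ hτ))

lemma H_normal : ∀ m, (H n t m).Normal := by
  have main : ∀ d m, n ≤ m + d → (H n t m).Normal := by
    intro d
    induction d with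
    | zero =>
      intro m h
      rw [H_eq_bot n t (by omega)]
      infer_instance
    | succ d ih =>
      intro m hm
      have IH : ∀ m', m < m' → (H n t m').Normal := fun m' hm' => ih m' (by omega)
      have key : ∀ g : G n t, ∀ h ∈ H n t m, g * h * g⁻¹ ∈ H n t m ∧ g⁻¹ * h * g ∈ H n t m := by
        set K : Subgroup (G n t) :=
          { carrier := {g | ∀ h ∈ H n t m, g * h * g⁻¹ ∈ H n t m ∧ g⁻¹ * h * g ∈ H n t m}
            one_mem' := by
              intro h hh
              constructor
              · have e : (1 : G n t) * h * 1⁻¹ = h := by group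
                rw [e]; exact hh
              · have e : (1 : G n t)⁻¹ * h * 1 = h := by group
                rw [e]; exact hh
            mul_mem' := by
              intro x y hx hy
              intro h hh
              constructor
              · have e : x * y * h * (x * y)⁻¹ = x * (y * h * y⁻¹) * x⁻¹ := by group
                rw [e]
                exact (hx _ (hy h hh).1).1
              · have e : (x * y)⁻¹ * h * (x * y) = y⁻¹ * (x⁻¹ * h * x) * y := by group
                rw [e]
                exact (hy _ (hx h hh).2).2
            inv_mem' := by
              intro x hx h hh
              constructor
              · have e : x⁻¹ * h * x⁻¹⁻¹ = x⁻¹ * h * x := by group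
                rw [e]
                exact (hx h hh).2
              · have e : x⁻¹⁻¹ * h * x⁻¹ = x * h * x⁻¹ := by group
                rw [e]
                exact (hx h hh).1 } with hK
        have hgen : Set.range (a n t) ⊆ K := by
          rintro _ ⟨p, rfl⟩
          intro h hh
          -- conjugation by `a p` in both directions maps `H m` to itself
          have c1 : H n t m ≤ Subgroup.comap (MulAut.conj (a n t p)).toMonoidHom (H n t m) := by
            apply (Subgroup.closure_le _).mpr
            rintro x ⟨k, hk, rfl⟩
            show (MulAut.conj (a n t p)).toMonoidHom (a n t k) ∈ H n t m
            simpa [MulAut.conj_apply] using (conj_gen_mem n t p k m hk IH).1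
          have c2 : H n t m ≤ Subgroup.comap (MulAut.conj (a n t p)⁻¹).toMonoidHom (H n t m) := by
            apply (Subgroup.closure_le _).mpr
            rintro x ⟨k, hk, rfl⟩
            show (MulAut.conj (a n t p)⁻¹).toMonoidHom (a n t k) ∈ H n t m
            have := (conj_gen_mem n t p k m hk IH).2
            simpa [MulAut.conj_apply] using this
          constructor
          · have := c1 hh
            simpa [MulAut.conj_apply] using this
          · have := c2 hh
            simpa [MulAut.conj_apply] using this
        have hK_top : (⊤ : Subgroup (G n t)) ≤ K := by
          rw [← G_gen n t]
          exact (Subgroup.closure_le _).mpr hgen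
        intro g
        exact hK_top (Subgroup.mem_top g)
      constructor
      intro h hh g
      exact (key g h hh).1
  intro m
  rcases le_or_gt n m with h | h
  · exact main 0 m (by omega)
  · exact main (n - m) m (by omega)

lemma exists_nf : ∀ (m : ℕ) (g : G n t), g ∈ H n t m → ∃ x, SuppGe n m x ∧ N n t x = g := by
  have main : ∀ d m, n ≤ m + d → ∀ g ∈ H n t m, ∃ x, SuppGe n m x ∧ N n t x = g := by
    intro d
    induction d with
    | zero =>
      intro m hm g hg
      rw [H_eq_bot n t (by omega)] at hg
      exact ⟨fun _ => 0, fun _ _ => rfl, by rw [Subgroup.mem_bot.mp hg]; exact N_zero n t⟩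
    | succ d ih =>
      intro m hm g hg
      rcases le_or_gt n m with hmn | hmn
      · rw [H_eq_bot n t hmn] at hg
        exact ⟨fun _ => 0, fun _ _ => rfl, by rw [Subgroup.mem_bot.mp hg]; exact N_zero n t⟩
      · set μ : Fin n := ⟨m, hmn⟩ with hμ
        have hμval : (μ : ℕ) = m := rfl
        have hnorm : (H n t (m+1)).Normal := H_normal n t (m+1)
        set S : Subgroup (G n t) :=
          { carrier := {g | ∃ x, SuppGe n m x ∧ N n t x = g}
            one_mem' := ⟨fun _ => 0, fun _ _ => rfl, N_zero n t⟩
            mul_mem' := by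
              rintro g₁ g₂ ⟨x, hx, rfl⟩ ⟨y, hy, rfl⟩
              have hx' : SuppGe n (m+1) (eraseF n μ x) := suppGe_eraseF n μ x hx
              have hy' : SuppGe n (m+1) (eraseF n μ y) := suppGe_eraseF n μ y hy
              have e1 := N_decomp n t μ x hx
              have e2 := N_decomp n t μ y hy
              have hinner : (a n t μ ^ (y μ))⁻¹ * N n t (eraseF n μ x) * a n t μ ^ (y μ)
                  * N n t (eraseF n μ y) ∈ H n t (m+1) := by
                apply Subgroup.mul_mem _ _ (N_mem_H n t hy')
                have := hnorm.conj_mem _ (N_mem_H n t hx') (a n t μ ^ (y μ))⁻¹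
                simpa using this
              obtain ⟨z, hz, hzeq⟩ := ih (m+1) (by omega) _ hinner
              refine ⟨sing n μ (x μ + y μ) + z, ?_, ?_⟩
              · intro k hk
                have hks : sing n μ (x μ + y μ) k = 0 := by
                  have : k ≠ μ := by
                    intro hkk; subst hkk; omega
                  simp [sing, this]
                simp [hks, hz k (by omega)]
              · have e3 : N n t (sing n μ (x μ + y μ) + z)
                    = a n t μ ^ (x μ + y μ) * N n t z := by
                  rw [N_add_split n t (m+1) _ _
                    (by simpa [hμval] using suppLt_sing n μ (x μ + y μ)) hz, N_sing]
                rw [e3, hzeq, e1, e2, zpow_add]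
                group
            inv_mem' := by
              rintro g ⟨x, hx, rfl⟩
              have hx' : SuppGe n (m+1) (eraseF n μ x) := suppGe_eraseF n μ x hx
              have e1 := N_decomp n t μ x hx
              have hinner : a n t μ ^ (x μ) * (N n t (eraseF n μ x))⁻¹ * (a n t μ ^ (x μ))⁻¹
                  ∈ H n t (m+1) :=
                hnorm.conj_mem _ (Subgroup.inv_mem _ (N_mem_H n t hx')) _
              obtain ⟨z, hz, hzeq⟩ := ih (m+1) (by omega) _ hinner
              refine ⟨sing n μ (-(x μ)) + z, ?_, ?_⟩
              · intro k hk
                have hks : sing n μ (-(x μ)) k = 0 := by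
                  have : k ≠ μ := by intro hkk; subst hkk; omega
                  simp [sing, this]
                simp [hks, hz k (by omega)]
              · have e3 : N n t (sing n μ (-(x μ)) + z)
                    = a n t μ ^ (-(x μ)) * N n t z := by
                  rw [N_add_split n t (m+1) _ _
                    (by simpa [hμval] using suppLt_sing n μ (-(x μ))) hz, N_sing]
                rw [e3, hzeq, e1]
                group } with hS
        have hle : H n t m ≤ S := by
          apply (Subgroup.closure_le _).mpr
          rintro x ⟨k, hk, rfl⟩
          exact ⟨sing n k 1, suppGe_sing n m k 1 hk, by rw [N_sing, zpow_one]⟩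
        exact hle hg
  intro m g hg
  rcases le_or_gt n m with h | h
  · exact main 0 m (by omega) g hg
  · exact main (n - m) m (by omega) g hg

lemma H_zero_top : H n t 0 = ⊤ := by
  rw [H]
  have : {x | ∃ k : Fin n, 0 ≤ (k : ℕ) ∧ x = a n t k} = Set.range (a n t) := by
    ext x
    constructor
    · rintro ⟨k, _, rfl⟩; exact ⟨k, rfl⟩
    · rintro ⟨k, rfl⟩; exact ⟨k, Nat.zero_le _, rfl⟩
  rw [this, G_gen n t]

lemma N_surj : Function.Surjective (N n t) := by
  intro g
  obtain ⟨x, _, hx⟩ := exists_nf n t 0 g (by rw [H_zero_top n t]; trivial)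
  exact ⟨x, hx⟩

end NF

section Mu

variable (n : ℕ) (t : Fin n → Fin n → Fin n → ℤ) (hN : Function.Bijective (N n t))

/-- Transported multiplication on `ℤⁿ`. -/
noncomputable def mu : (Fin n → ℤ) → (Fin n → ℤ) → (Fin n → ℤ) := fun x y =>
  (Equiv.ofBijective (N n t) hN).symm (N n t x * N n t y)

lemma N_mu (x y : Fin n → ℤ) : N n t (mu n t hN x y) = N n t x * N n t y :=
  (Equiv.ofBijective (N n t) hN).apply_symm_apply _

lemma mu_unique {x y w : Fin n → ℤ} (h : N n t w = N n t x * N n t y) :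
    mu n t hN x y = w :=
  hN.1 (by rw [N_mu, h])

lemma N_low_high (m : ℕ) (x : Fin n → ℤ) :
    N n t x = N n t (lowPart n m x) * N n t (highPart n m x) :=
  prodPow_low_high n (a n t) m x

lemma mu_zero_right (x : Fin n → ℤ) : mu n t hN x (fun _ => 0) = x :=
  mu_unique n t hN (by rw [N_zero, mul_one])

lemma mu_zero_left (x : Fin n → ℤ) : mu n t hN (fun _ => 0) x = x :=
  mu_unique n t hN (by rw [N_zero, one_mul])

/-- Low coordinates of a product with a high-supported right factor. -/
lemma mu_low {m : ℕ} (x v : Fin n → ℤ) (hv : SuppGe n m v) :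
    ∀ k : Fin n, (k : ℕ) < m → mu n t hN x v k = x k := by
  have hmem : N n t (highPart n m x) * N n t v ∈ H n t m :=
    Subgroup.mul_mem _ (N_mem_H n t (suppGe_highPart n m x)) (N_mem_H n t hv)
  obtain ⟨z, hz, hzeq⟩ := exists_nf n t m _ hmem
  have heq : mu n t hN x v = lowPart n m x + z := by
    apply mu_unique
    rw [N_add_split n t m _ _ (suppLt_lowPart n m x) hz, hzeq,
      N_low_high n t m x]  -- careful direction
    group
  intro k hk
  rw [heq]
  simp [lowPart, hk, hz k hk]

/-- `a μ` is central modulo `H (μ+1)`. -/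
lemma central_mod (μ : Fin n) :
    haveI : (H n t ((μ : ℕ)+1)).Normal := H_normal n t _
    ∀ g : G n t, Commute ((QuotientGroup.mk' (H n t ((μ : ℕ)+1))) (a n t μ))
      ((QuotientGroup.mk' (H n t ((μ : ℕ)+1))) g) := by
  haveI : (H n t ((μ : ℕ)+1)).Normal := H_normal n t _
  set q := QuotientGroup.mk' (H n t ((μ : ℕ)+1)) with hq
  have key : ∀ g : G n t, g ∈ Subgroup.comap q (Subgroup.centralizer {q (a n t μ)}) := by
    intro g
    have hgen : Set.range (a n t) ⊆ Subgroup.comap q (Subgroup.centralizer {q (a n t μ)}) := by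
      rintro _ ⟨p, rfl⟩
      rw [SetLike.mem_coe, Subgroup.mem_comap]
      rw [Subgroup.mem_centralizer_iff]
      rintro _ rfl
      rcases lt_trichotomy p μ with hpm | rfl | hmp
      · have hr := rel n t p μ hpm
        have hτ : q (N n t (tail n t p μ)) = 1 := by
          rw [hq, QuotientGroup.mk'_apply, QuotientGroup.eq_one_iff]
          exact N_mem_H n t (suppGe_tail n t p μ)
        have := congrArg q hr
        rw [map_mul, map_mul, map_mul, hτ, mul_one] at this
        exact this
      · rfl
      · have hp1 : q (a n t p) = 1 := by
          rw [hq, QuotientGroup.mk'_apply, QuotientGroup.eq_one_iff]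
          exact a_mem_H n t (by omega)
        rw [hp1, one_mul, mul_one]
    have htop : (⊤ : Subgroup (G n t)) ≤ Subgroup.comap q (Subgroup.centralizer {q (a n t μ)}) := by
      rw [← G_gen n t]
      exact (Subgroup.closure_le _).mpr hgen
    exact htop (Subgroup.mem_top g)
  intro g
  have := key g
  rw [Subgroup.mem_comap, Subgroup.mem_centralizer_iff] at this
  exact (this _ rfl)

/-- Powers of `a μ` commute with everything modulo `H (μ+1)`. -/
lemma comm_pow (μ : Fin n) (s : ℤ) (g : G n t) :
    ∃ h ∈ H n t ((μ : ℕ)+1), (a n t μ) ^ s * g = g * (a n t μ) ^ s * h := by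
  haveI : (H n t ((μ : ℕ)+1)).Normal := H_normal n t _
  set q := QuotientGroup.mk' (H n t ((μ : ℕ)+1)) with hq
  have hc : Commute (q ((a n t μ) ^ s)) (q g) := by
    rw [map_zpow]
    exact (central_mod n t μ g).zpow_left s
  have heq : q ((a n t μ) ^ s * g) = q (g * (a n t μ) ^ s) := by
    rw [map_mul, map_mul, hc.eq]
  rw [hq] at heq
  simp only [QuotientGroup.mk'_apply] at heq
  rw [QuotientGroup.eq] at heq
  refine ⟨(((a n t μ) ^ s * g)⁻¹ * (g * (a n t μ) ^ s))⁻¹, Subgroup.inv_mem _ heq, ?_⟩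
  group

/-- Key coordinate lemma: additivity of the `μ`-th coordinate, and the coordinates
below `μ` only depend on the low parts. -/
lemma mu_coord (u v : Fin n → ℤ) (μ : Fin n) :
    mu n t hN u v μ = u μ + v μ
        + mu n t hN (lowPart n (μ : ℕ) u) (lowPart n (μ : ℕ) v) μ
      ∧ ∀ l : Fin n, l < μ →
        mu n t hN u v l = mu n t hN (lowPart n (μ : ℕ) u) (lowPart n (μ : ℕ) v) l := by
  haveI : (H n t ((μ : ℕ)+1)).Normal := H_normal n t _
  set m : ℕ := (μ : ℕ) with hm
  set q := QuotientGroup.mk' (H n t (m+1)) with hq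
  -- kill of high parts
  have hlow1 : ∀ x : Fin n → ℤ, lowPart n (m+1) x = lowPart n m x + sing n μ (x μ) := by
    intro x
    funext k
    rcases Nat.lt_trichotomy (k : ℕ) m with h | h | h
    · have : k ≠ μ := by intro hh; subst hh; omega
      simp [lowPart, sing, h, this, Nat.lt_succ_of_lt h]
    · have : k = μ := Fin.ext (by omega)
      subst this
      simp [lowPart, sing, h]
    · have : k ≠ μ := by intro hh; subst hh; omega
      simp [lowPart, sing, this, Nat.not_lt.mpr (by omega : m + 1 ≤ (k:ℕ)),
        Nat.not_lt.mpr (by omega : m ≤ (k:ℕ))]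
  have hqN : ∀ x : Fin n → ℤ, q (N n t x) = q (N n t (lowPart n m x)) * q (a n t μ) ^ (x μ) := by
    intro x
    have h1 : N n t x = N n t (lowPart n (m+1) x) * N n t (highPart n (m+1) x) :=
      N_low_high n t (m+1) x
    have h2 : q (N n t (highPart n (m+1) x)) = 1 := by
      rw [hq, QuotientGroup.mk'_apply, QuotientGroup.eq_one_iff]
      exact N_mem_H n t (suppGe_highPart n (m+1) x)
    have h3 : N n t (lowPart n (m+1) x)
        = N n t (lowPart n m x) * a n t μ ^ (x μ) := by
      rw [hlow1 x, N_add_split n t m _ _ (suppLt_lowPart n m x)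
        (suppGe_sing n m μ (x μ) (le_refl m)), N_sing]
    rw [h1, map_mul, h2, mul_one, h3, map_mul, map_zpow]
  -- uniqueness of low normal forms mod H (m+1)
  have huniq : ∀ α β : Fin n → ℤ, SuppLt n (m+1) α → SuppLt n (m+1) β →
      q (N n t α) = q (N n t β) → α = β := by
    intro α β hα hβ h
    rw [hq] at h
    simp only [QuotientGroup.mk'_apply] at h
    rw [QuotientGroup.eq] at h
    obtain ⟨z, hz, hzeq⟩ := exists_nf n t (m+1) _ h
    have : N n t β = N n t (α + z) := by
      rw [N_add_split n t (m+1) _ _ hα hz, hzeq]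
      group
    have hβα : β = α + z := hN.1 this
    funext k
    rcases Nat.lt_or_ge (k : ℕ) (m+1) with hk | hk
    · rw [hβα]
      simp [hz k hk]
    · rw [hα k hk, hβ k hk]
  -- main computation
  set w₀ := mu n t hN (lowPart n m u) (lowPart n m v) with hw₀
  have hcomm : Commute (q (a n t μ)) (q (N n t (lowPart n m v))) := central_mod n t μ _
  have main : q (N n t (mu n t hN u v))
      = q (N n t (lowPart n m w₀)) * q (a n t μ) ^ (w₀ μ + u μ + v μ) := by
    rw [N_mu, map_mul, hqN u, hqN v]
    have hshuffle : q (N n t (lowPart n m u)) * q (a n t μ) ^ (u μ)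
          * (q (N n t (lowPart n m v)) * q (a n t μ) ^ (v μ))
        = (q (N n t (lowPart n m u)) * q (N n t (lowPart n m v)))
          * q (a n t μ) ^ (u μ + v μ) := by
      have hc : Commute (q (a n t μ) ^ (u μ)) (q (N n t (lowPart n m v))) :=
        hcomm.zpow_left (u μ)
      rw [zpow_add]
      calc q (N n t (lowPart n m u)) * q (a n t μ) ^ (u μ)
            * (q (N n t (lowPart n m v)) * q (a n t μ) ^ (v μ))
          = q (N n t (lowPart n m u))
            * (q (a n t μ) ^ (u μ) * q (N n t (lowPart n m v))) * q (a n t μ) ^ (v μ) := by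
            group
        _ = q (N n t (lowPart n m u))
            * (q (N n t (lowPart n m v)) * q (a n t μ) ^ (u μ)) * q (a n t μ) ^ (v μ) := by
            rw [hc.eq]
        _ = q (N n t (lowPart n m u)) * q (N n t (lowPart n m v))
            * (q (a n t μ) ^ (u μ) * q (a n t μ) ^ (v μ)) := by group
    rw [hshuffle, ← map_mul q (N n t (lowPart n m u)) (N n t (lowPart n m v)),
      ← N_mu n t hN (lowPart n m u) (lowPart n m v), ← hw₀, hqN w₀]
    rw [zpow_add, zpow_add]
    group
  have hqlow : ∀ x : Fin n → ℤ, q (N n t (lowPart n (m+1) x)) = q (N n t x) := by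
    intro x
    rw [hqN x, hqN (lowPart n (m+1) x)]
    have e1 : lowPart n m (lowPart n (m+1) x) = lowPart n m x := by
      funext k
      by_cases hk : (k : ℕ) < m
      · simp [lowPart, hk, Nat.lt_succ_of_lt hk]
      · simp [lowPart, hk]
    have e2 : lowPart n (m+1) x μ = x μ := by
      simp [lowPart, Nat.lt_succ_of_le (le_refl m), hm]
    rw [e1, e2]
  have hfinal : lowPart n (m+1) (mu n t hN u v)
      = lowPart n m w₀ + sing n μ (w₀ μ + u μ + v μ) := by
    apply huniq
    · exact suppLt_lowPart n (m+1) _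
    · intro k hk
      have hk1 : lowPart n m w₀ k = 0 := by
        simp [lowPart, Nat.not_lt.mpr (by omega : m ≤ (k : ℕ))]
      have hk2 : sing n μ (w₀ μ + u μ + v μ) k = 0 := by
        have : k ≠ μ := by intro hh; subst hh; omega
        simp [sing, this]
      simp [hk1, hk2]
    · rw [hqlow, main]
      have e3 : N n t (lowPart n m w₀ + sing n μ (w₀ μ + u μ + v μ))
          = N n t (lowPart n m w₀) * a n t μ ^ (w₀ μ + u μ + v μ) := by
        rw [N_add_split n t m _ _ (suppLt_lowPart n m _)
          (suppGe_sing n m μ _ (le_refl m)), N_sing]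
      rw [e3, map_mul, map_zpow]
  constructor
  · have := congrFun hfinal μ
    have e1 : lowPart n (m+1) (mu n t hN u v) μ = mu n t hN u v μ := by
      simp [lowPart, Nat.lt_succ_of_le (le_refl m), hm]
    have e2 : lowPart n m w₀ μ = 0 := by
      simp [lowPart, hm]
    have e3 : sing n μ (w₀ μ + u μ + v μ) μ = w₀ μ + u μ + v μ := by simp [sing]
    rw [e1] at this
    simp only [Pi.add_apply, e2, e3] at this
    rw [this, hw₀]
    ring
  · intro l hl
    have := congrFun hfinal l
    have hlm : (l : ℕ) < m := hl
    have e1 : lowPart n (m+1) (mu n t hN u v) l = mu n t hN u v l := by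
      simp [lowPart, Nat.lt_succ_of_lt hlm]
    have e2 : lowPart n m w₀ l = w₀ l := by simp [lowPart, hlm]
    have e3 : sing n μ (w₀ μ + u μ + v μ) l = 0 := by
      have : l ≠ μ := by intro hh; subst hh; omega
      simp [sing, this]
    rw [e1] at this
    simp only [Pi.add_apply, e2, e3, add_zero] at this
    rw [this, hw₀]

end Mu

section Mu2

variable (n : ℕ) (t : Fin n → Fin n → Fin n → ℤ) (hN : Function.Bijective (N n t))

lemma suppGe_of_le {m m' : ℕ} (h : m ≤ m') {x : Fin n → ℤ} (hx : SuppGe n m' x) :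
    SuppGe n m x := fun k hk => hx k (by omega)

lemma lowPart_eq_zero_of_suppGe {m : ℕ} {v : Fin n → ℤ} (hv : SuppGe n m v) :
    lowPart n m v = fun _ => 0 := by
  funext k
  by_cases hk : (k : ℕ) < m
  · simp [lowPart, hk, hv k hk]
  · simp [lowPart, hk]

/-- Coordinate `μ` of a product with a `≥ μ`-supported right factor. -/
lemma mu_high (x v : Fin n → ℤ) (μ : Fin n) (hv : SuppGe n (μ : ℕ) v) :
    mu n t hN x v μ = x μ + v μ := by
  have h := (mu_coord n t hN x v μ).1
  rw [lowPart_eq_zero_of_suppGe n hv, mu_zero_right n t hN] at h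
  have : lowPart n (μ : ℕ) x μ = 0 := by simp [lowPart]
  rw [this, add_zero] at h
  exact h

lemma mu_tri (b x x' : Fin n → ℤ) (k : Fin n) (h : ∀ l, l < k → x l = x' l) :
    mu n t hN b x k - x k = mu n t hN b x' k - x' k := by
  have h1 := (mu_coord n t hN b x k).1
  have h2 := (mu_coord n t hN b x' k).1
  have hl : lowPart n (k : ℕ) x = lowPart n (k : ℕ) x' := by
    funext l
    by_cases hlk : (l : ℕ) < (k : ℕ)
    · simp [lowPart, hlk, h l hlk]
    · simp [lowPart, hlk]
  rw [hl] at h1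
  omega

noncomputable def binv (b : Fin n → ℤ) : Fin n → ℤ :=
  (Equiv.ofBijective (N n t) hN).symm ((N n t b)⁻¹)

lemma N_binv (b : Fin n → ℤ) : N n t (binv n t hN b) = (N n t b)⁻¹ :=
  (Equiv.ofBijective (N n t) hN).apply_symm_apply _

noncomputable def Lperm (b : Fin n → ℤ) : Equiv.Perm (Fin n → ℤ) where
  toFun := mu n t hN b
  invFun := mu n t hN (binv n t hN b)
  left_inv := fun x => hN.1 (by rw [N_mu, N_mu, N_binv]; group)
  right_inv := fun x => hN.1 (by rw [N_mu, N_mu, N_binv]; group)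

noncomputable def pw (b : Fin n → ℤ) (s : ℤ) : Fin n → ℤ :=
  ((Lperm n t hN b) ^ s) (fun _ => 0)

lemma pw_zero (b : Fin n → ℤ) : pw n t hN b 0 = fun _ => 0 := by
  rw [pw, zpow_zero]
  rfl

lemma pw_succ (b : Fin n → ℤ) (s : ℤ) :
    pw n t hN b (s+1) = mu n t hN b (pw n t hN b s) := by
  rw [pw, pw, show (Lperm n t hN b) ^ (s+1) = Lperm n t hN b * (Lperm n t hN b) ^ s by
    rw [add_comm, zpow_add, zpow_one]]
  rfl

lemma pw_pred (b : Fin n → ℤ) (s : ℤ) :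
    pw n t hN b (s-1) = mu n t hN (binv n t hN b) (pw n t hN b s) := by
  rw [pw, pw, show (Lperm n t hN b) ^ (s-1) = (Lperm n t hN b)⁻¹ * (Lperm n t hN b) ^ s by
    rw [sub_eq_add_neg, add_comm, zpow_add, zpow_neg_one]]
  rfl

lemma N_pw (b : Fin n → ℤ) (s : ℤ) : N n t (pw n t hN b s) = (N n t b) ^ s := by
  induction s using Int.induction_on with
  | zero => rw [pw_zero, N_zero, zpow_zero]
  | succ k ih =>
    rw [pw_succ, N_mu, ih, ← zpow_one_add]
    congr 1
    ring
  | pred k ih =>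
    rw [show (-(k:ℤ) - 1) = (-(k:ℤ)) - 1 by ring, pw_pred, N_mu, N_binv, ih, ← zpow_neg_one,
      ← zpow_add]
    congr 1
    ring

lemma binv_supp {m : ℕ} {b : Fin n → ℤ} (hb : SuppGe n m b) : SuppGe n m (binv n t hN b) := by
  have hmem : (N n t b)⁻¹ ∈ H n t m := Subgroup.inv_mem _ (N_mem_H n t hb)
  obtain ⟨z, hz, hzeq⟩ := exists_nf n t m _ hmem
  have : binv n t hN b = z := hN.1 (by rw [N_binv, hzeq])
  rw [this]
  exact hz

lemma pw_supp {m : ℕ} {b : Fin n → ℤ} (hb : SuppGe n m b) (s : ℤ) :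
    SuppGe n m (pw n t hN b s) := by
  induction s using Int.induction_on with
  | zero => rw [pw_zero]; exact fun _ _ => rfl
  | succ k ih =>
    rw [pw_succ]
    intro l hl
    rw [mu_low n t hN _ _ ih l hl]
    exact hb l hl
  | pred k ih =>
    rw [show (-(k:ℤ) - 1) = (-(k:ℤ)) - 1 by ring, pw_pred]
    intro l hl
    rw [mu_low n t hN _ _ ih l hl]
    exact binv_supp n t hN hb l hl

lemma mu_binv_self (b : Fin n → ℤ) : mu n t hN b (binv n t hN b) = fun _ => 0 :=
  mu_unique n t hN (by rw [N_zero, N_binv]; group)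

lemma binv_coord {μ : Fin n} {b : Fin n → ℤ} (hb : SuppGe n (μ : ℕ) b) :
    binv n t hN b μ = - (b μ) := by
  have h := mu_high n t hN b (binv n t hN b) μ (binv_supp n t hN hb)
  rw [mu_binv_self] at h
  have h' : (0 : ℤ) = b μ + binv n t hN b μ := h
  omega

lemma pw_coord {μ : Fin n} {b : Fin n → ℤ} (hb : SuppGe n (μ : ℕ) b) (s : ℤ) :
    pw n t hN b s μ = s * b μ := by
  induction s using Int.induction_on with
  | zero => rw [pw_zero]; ring
  | succ k ih =>
    rw [pw_succ, mu_high n t hN _ _ μ (pw_supp n t hN hb k), ih]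
    ring
  | pred k ih =>
    rw [show (-(k:ℤ) - 1) = (-(k:ℤ)) - 1 by ring, pw_pred,
      mu_high n t hN _ _ μ (pw_supp n t hN hb (-(k:ℤ))), ih, binv_coord n t hN hb]
    ring

end Mu2

section Fold

variable (n : ℕ) (t : Fin n → Fin n → Fin n → ℤ) (hN : Function.Bijective (N n t))
variable (b : Fin n → Fin n → ℤ)

noncomputable def fold : List (Fin n) → (Fin n → ℤ) → Fin n → ℤ
  | [], _ => fun _ => 0
  | c :: l, x => mu n t hN (pw n t hN (b c) (x c)) (fold l x)

lemma fold_N : ∀ (lst : List (Fin n)) (x : Fin n → ℤ),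
    N n t (fold n t hN b lst x) = (lst.map fun c => N n t (b c) ^ x c).prod := by
  intro lst
  induction lst with
  | nil => intro x; simp [fold, N_zero]
  | cons c l ih =>
    intro x
    rw [fold, N_mu, N_pw, ih, List.map_cons, List.prod_cons]

lemma fold_supp (hb : ∀ c : Fin n, SuppGe n (c : ℕ) (b c)) (m : ℕ) : ∀ (lst : List (Fin n)), (∀ c ∈ lst, m ≤ (c : ℕ)) →
    ∀ x, SuppGe n m (fold n t hN b lst x) := by
  intro lst
  induction lst with
  | nil => intro _ x k hk; rfl
  | cons c l ih =>
    intro hmem x k hk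
    rw [fold, mu_low n t hN _ _ (ih (fun c' hc' => hmem c' (List.mem_cons_of_mem c hc')) x) k hk]
    exact pw_supp n t hN (suppGe_of_le n (hmem c (List.mem_cons_self)) (hb c)) (x c) k hk

lemma fold_dep (hb : ∀ c : Fin n, SuppGe n (c : ℕ) (b c)) : ∀ (lst : List (Fin n)) (k : Fin n) (x x' : Fin n → ℤ),
    (∀ p ∈ lst, p ≤ k → x p = x' p) →
    fold n t hN b lst x k = fold n t hN b lst x' k := by
  intro lst
  induction lst with
  | nil => intro _ _ _ _; rfl
  | cons c l ih =>
    intro k x x' hagree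
    have hc1 := (mu_coord n t hN (pw n t hN (b c) (x c)) (fold n t hN b l x) k).1
    have hc2 := (mu_coord n t hN (pw n t hN (b c) (x' c)) (fold n t hN b l x') k).1
    have h2 : fold n t hN b l x k = fold n t hN b l x' k :=
      ih k x x' (fun p hp hpk => hagree p (List.mem_cons_of_mem c hp) hpk)
    have h3 : lowPart n (k : ℕ) (fold n t hN b l x) = lowPart n (k : ℕ) (fold n t hN b l x') := by
      funext l'
      by_cases hl' : (l' : ℕ) < (k : ℕ)
      · have := ih l' x x' (fun p hp hpl =>
          hagree p (List.mem_cons_of_mem c hp) (le_trans hpl (le_of_lt hl')))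
        simp [lowPart, hl', this]
      · simp [lowPart, hl']
    by_cases hck : c ≤ k
    · have hxc : x c = x' c := hagree c (List.mem_cons_self) hck
      show mu n t hN (pw n t hN (b c) (x c)) (fold n t hN b l x) k
          = mu n t hN (pw n t hN (b c) (x' c)) (fold n t hN b l x') k
      rw [hc1, hc2, hxc, h2, h3]
    · push_neg at hck
      have hsupp1 : SuppGe n ((c : ℕ)) (pw n t hN (b c) (x c)) := pw_supp n t hN (hb c) _
      have hsupp2 : SuppGe n ((c : ℕ)) (pw n t hN (b c) (x' c)) := pw_supp n t hN (hb c) _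
      have e1 : pw n t hN (b c) (x c) k = 0 := hsupp1 k hck
      have e2 : pw n t hN (b c) (x' c) k = 0 := hsupp2 k hck
      have e3 : lowPart n (k : ℕ) (pw n t hN (b c) (x c)) = fun _ => 0 :=
        lowPart_eq_zero_of_suppGe n (suppGe_of_le n (le_of_lt hck) hsupp1)
      have e4 : lowPart n (k : ℕ) (pw n t hN (b c) (x' c)) = fun _ => 0 :=
        lowPart_eq_zero_of_suppGe n (suppGe_of_le n (le_of_lt hck) hsupp2)
      show mu n t hN (pw n t hN (b c) (x c)) (fold n t hN b l x) k
          = mu n t hN (pw n t hN (b c) (x' c)) (fold n t hN b l x') k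
      rw [hc1, hc2, e1, e2, e3, e4, h2, h3]

lemma fold_drop_cons {m : ℕ} (hm : m < n) :
    (List.finRange n).drop m = (⟨m, hm⟩ : Fin n) :: (List.finRange n).drop (m+1) := by
  rw [List.drop_eq_getElem_cons (by simpa using hm)]
  congr 1
  rw [List.getElem_finRange]
  rfl

lemma fold_drop_supp (hb : ∀ c : Fin n, SuppGe n (c : ℕ) (b c)) (x : Fin n → ℤ) (m : ℕ) :
    SuppGe n m (fold n t hN b ((List.finRange n).drop m) x) :=
  fold_supp n t hN b hb m ((List.finRange n).drop m) (fun c hc => mem_drop_finRange n hc) x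

lemma fold_drop_at (hb : ∀ c : Fin n, SuppGe n (c : ℕ) (b c)) (hb1 : ∀ c : Fin n, b c c = 1) (k : Fin n) (x : Fin n → ℤ) :
    fold n t hN b ((List.finRange n).drop (k : ℕ)) x k = x k := by
  rw [fold_drop_cons n k.isLt]
  show mu n t hN (pw n t hN (b ⟨(k:ℕ), k.isLt⟩) (x ⟨(k:ℕ), k.isLt⟩))
      (fold n t hN b ((List.finRange n).drop ((k:ℕ)+1)) x) k = x k
  have hk : (⟨(k:ℕ), k.isLt⟩ : Fin n) = k := by
    apply Fin.ext
    rfl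
  rw [hk]
  have hsupp : SuppGe n ((k:ℕ)+1) (fold n t hN b ((List.finRange n).drop ((k:ℕ)+1)) x) :=
    fold_drop_supp n t hN b hb x ((k:ℕ)+1)
  rw [mu_low n t hN _ _ hsupp k (by omega), pw_coord n t hN (hb k), hb1 k, mul_one]

lemma fold_drop_tri (hb : ∀ c : Fin n, SuppGe n (c : ℕ) (b c)) (hb1 : ∀ c : Fin n, b c c = 1) (k : Fin n) : ∀ (j m : ℕ), m + j = (k : ℕ) →
    ∀ (x x' : Fin n → ℤ), (∀ l, l < k → x l = x' l) →
    fold n t hN b ((List.finRange n).drop m) x k - x k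
      = fold n t hN b ((List.finRange n).drop m) x' k - x' k := by
  intro j
  induction j with
  | zero =>
    intro m hm x x' _
    have hmk : m = (k : ℕ) := by omega
    subst hmk
    rw [fold_drop_at n t hN b hb hb1 k x, fold_drop_at n t hN b hb hb1 k x']
    simp
  | succ j ihj =>
    intro m hm x x' hagree
    have hmn : m < n := by have := k.isLt; omega
    have hmk : m < (k : ℕ) := by omega
    rw [fold_drop_cons n hmn]
    set c : Fin n := ⟨m, hmn⟩ with hc
    show mu n t hN (pw n t hN (b c) (x c)) (fold n t hN b ((List.finRange n).drop (m+1)) x) k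
        - x k = mu n t hN (pw n t hN (b c) (x' c))
          (fold n t hN b ((List.finRange n).drop (m+1)) x') k - x' k
    have hc1 := (mu_coord n t hN (pw n t hN (b c) (x c))
      (fold n t hN b ((List.finRange n).drop (m+1)) x) k).1
    have hc2 := (mu_coord n t hN (pw n t hN (b c) (x' c))
      (fold n t hN b ((List.finRange n).drop (m+1)) x') k).1
    have hxc : x c = x' c := hagree c (by
      rw [Fin.lt_def]
      exact hmk)
    have h3 : lowPart n (k : ℕ) (fold n t hN b ((List.finRange n).drop (m+1)) x)
        = lowPart n (k : ℕ) (fold n t hN b ((List.finRange n).drop (m+1)) x') := by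
      funext l'
      by_cases hl' : (l' : ℕ) < (k : ℕ)
      · have := fold_dep n t hN b hb ((List.finRange n).drop (m+1)) l' x x'
          (fun p _ hpl => hagree p (by
            rw [Fin.lt_def] at *
            have : (p : ℕ) ≤ (l' : ℕ) := hpl
            omega))
        simp [lowPart, hl', this]
      · simp [lowPart, hl']
    have hmid := ihj (m+1) (by omega) x x' hagree
    rw [hc1, hc2, hxc, h3]
    omega

end Fold



section Poly

open MvPolynomial

variable {σ τ : Type*}

/-- `f : ℤ^σ → ℤ` is (the restriction of) a rational polynomial. -/
def IsPoly (f : (σ → ℤ) → ℤ) : Prop :=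
  ∃ P : MvPolynomial σ ℚ, ∀ x : σ → ℤ, (f x : ℚ) = MvPolynomial.eval (fun i => (x i : ℚ)) P

lemma isPoly_const (c : ℤ) : IsPoly (fun _ : σ → ℤ => c) :=
  ⟨MvPolynomial.C (c : ℚ), by simp⟩

lemma isPoly_proj (i : σ) : IsPoly (fun x : σ → ℤ => x i) := ⟨X i, by simp⟩

lemma IsPoly.congr {f g : (σ → ℤ) → ℤ} (hf : IsPoly f) (h : ∀ x, f x = g x) : IsPoly g := by
  obtain ⟨P, hP⟩ := hf
  exact ⟨P, fun x => by rw [← h x, hP x]⟩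

lemma IsPoly.add {f g : (σ → ℤ) → ℤ} (hf : IsPoly f) (hg : IsPoly g) :
    IsPoly (fun x => f x + g x) := by
  obtain ⟨P, hP⟩ := hf; obtain ⟨Q, hQ⟩ := hg
  exact ⟨P + Q, fun x => by rw [MvPolynomial.eval_add, ← hP x, ← hQ x]; push_cast; ring⟩

lemma IsPoly.neg {f : (σ → ℤ) → ℤ} (hf : IsPoly f) : IsPoly (fun x => - f x) := by
  obtain ⟨P, hP⟩ := hf
  exact ⟨-P, fun x => by rw [MvPolynomial.eval_neg, ← hP x]; push_cast; ring⟩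

lemma IsPoly.sub {f g : (σ → ℤ) → ℤ} (hf : IsPoly f) (hg : IsPoly g) :
    IsPoly (fun x => f x - g x) :=
  (hf.add hg.neg).congr fun x => by ring

lemma IsPoly.mul {f g : (σ → ℤ) → ℤ} (hf : IsPoly f) (hg : IsPoly g) :
    IsPoly (fun x => f x * g x) := by
  obtain ⟨P, hP⟩ := hf; obtain ⟨Q, hQ⟩ := hg
  exact ⟨P * Q, fun x => by rw [MvPolynomial.eval_mul, ← hP x, ← hQ x]; push_cast; ring⟩

lemma IsPoly.comp {f : (σ → ℤ) → ℤ} (hf : IsPoly f) {g : (τ → ℤ) → σ → ℤ}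
    (hg : ∀ s, IsPoly fun z => g z s) : IsPoly fun z => f (g z) := by
  obtain ⟨P, hP⟩ := hf
  choose Q hQ using hg
  refine ⟨MvPolynomial.bind₁ Q P, fun z => ?_⟩
  have h1 : MvPolynomial.eval (fun i => (z i : ℚ)) (MvPolynomial.bind₁ Q P)
      = MvPolynomial.eval (fun s => MvPolynomial.eval (fun i => (z i : ℚ)) (Q s)) P :=
    MvPolynomial.eval₂Hom_bind₁ _ _ _ _
  rw [h1, hP (g z)]
  have h2 : (fun s => ((g z s : ℚ))) = fun s => MvPolynomial.eval (fun i => (z i : ℚ)) (Q s) :=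
    funext fun s => hQ s z
  rw [h2]

end Poly

section AntiDeriv

open Polynomial

/-- Finite-difference identity for descending Pochhammer polynomials. -/
lemma descPochhammer_comp_sub (d : ℕ) :
    (descPochhammer ℚ (d + 1)).comp (X + 1) - descPochhammer ℚ (d + 1)
      = ((d : ℚ[X]) + 1) * descPochhammer ℚ d := by
  induction d with
  | zero => simp [descPochhammer_succ_right]
  | succ d ih =>
    have hsr := descPochhammer_succ_right ℚ (d + 1)
    have hsr' := descPochhammer_succ_right ℚ d
    have hcomp : (descPochhammer ℚ (d + 1)).comp (X + 1)
        = descPochhammer ℚ (d + 1) + ((d : ℚ[X]) + 1) * descPochhammer ℚ d := by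
      rw [← ih]; ring
    rw [hsr, mul_comp, hcomp, sub_comp, X_comp, natCast_comp]
    have key : descPochhammer ℚ d * (X - (d : ℚ[X])) = descPochhammer ℚ (d+1) := by
      rw [hsr']
    push_cast
    linear_combination ((d : ℚ[X]) + 1) * key

end AntiDeriv


section AD2
open Polynomial

open Polynomial


lemma exists_antideriv_rat : ∀ (d : ℕ) (P : ℚ[X]), P.natDegree ≤ d →
    ∃ q : ℚ[X], q.comp (X + 1) - q = P := by
  intro d
  induction d with
  | zero =>
    intro P hP
    refine ⟨C (P.coeff 0) * X, ?_⟩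
    conv_rhs => rw [eq_C_of_natDegree_le_zero hP]
    rw [mul_comp, C_comp, X_comp]
    ring
  | succ d ih =>
    intro P hP
    set c := P.coeff (d + 1) with hc
    have hdeg : (descPochhammer ℚ (d+1)).natDegree = d + 1 := descPochhammer_natDegree (R := ℚ) (d+1)
    have hmon : Monic (descPochhammer ℚ (d+1)) := monic_descPochhammer ℚ (d+1)
    have hdeg' : (P - C c * descPochhammer ℚ (d+1)).natDegree ≤ d := by
      rw [natDegree_le_iff_coeff_eq_zero]
      intro M hM
      rcases Nat.lt_or_ge M (d+2) with h | h
      · have hM1 : M = d + 1 := by omega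
        subst hM1
        rw [coeff_sub, coeff_C_mul,
          show (descPochhammer ℚ (d+1)).coeff (d+1) = 1 by
            have h1 := hmon.coeff_natDegree; rwa [hdeg] at h1]
        simp [hc]
      · rw [coeff_sub, coeff_C_mul]
        rw [coeff_eq_zero_of_natDegree_lt (by omega), coeff_eq_zero_of_natDegree_lt (by omega)]
        ring
    obtain ⟨q', hq'⟩ := ih _ hdeg'
    refine ⟨q' + C (c / ((d : ℚ) + 2)) * descPochhammer ℚ (d + 2), ?_⟩
    have hds := descPochhammer_comp_sub (d + 1)
    have hcast : (((d+1 : ℕ) : ℚ[X]) + 1) = C ((d : ℚ) + 2) := by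
      push_cast
      rw [map_add, C_eq_natCast, show (C (2:ℚ) : ℚ[X]) = 2 from map_ofNat _ 2]
      ring
    rw [add_comp, mul_comp, C_comp]
    have expand : q'.comp (X+1) - q' + C (c / ((d : ℚ) + 2)) *
        ((descPochhammer ℚ (d + 2)).comp (X+1) - descPochhammer ℚ (d+2)) = P - C c * descPochhammer ℚ (d+1) + C (c / ((d : ℚ) + 2)) * (C ((d : ℚ) + 2) * descPochhammer ℚ (d+1)) := by
      rw [hq', hds, hcast]
    have hne : ((d : ℚ) + 2) ≠ 0 := by positivity
    have hCc : C (c / ((d : ℚ) + 2)) * C ((d : ℚ) + 2) = C c := by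
      rw [← C_mul, div_mul_cancel₀ _ hne]
    calc q'.comp (X + 1) + C (c / ((d : ℚ) + 2)) * (descPochhammer ℚ (d + 2)).comp (X + 1) -
          (q' + C (c / ((d : ℚ) + 2)) * descPochhammer ℚ (d + 2))
        = q'.comp (X+1) - q' + C (c / ((d : ℚ) + 2)) *
            ((descPochhammer ℚ (d + 2)).comp (X+1) - descPochhammer ℚ (d+2)) := by ring
      _ = P - C c * descPochhammer ℚ (d+1) + C (c / ((d : ℚ) + 2)) * (C ((d : ℚ) + 2) * descPochhammer ℚ (d+1)) := expand
      _ = P := by rw [← mul_assoc, hCc]; ring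

lemma exists_antideriv {R : Type*} [CommRing R] [Algebra ℚ R] (P : R[X]) :
    ∃ Q : R[X], Q.comp (X + 1) - Q = P := by
  have hq : ∀ d : ℕ, ∃ q : ℚ[X], q.comp (X + 1) - q = X ^ d := fun d =>
    exists_antideriv_rat d (X ^ d) (natDegree_X_pow_le d)
  choose qd hqd using hq
  classical
  refine ⟨∑ d ∈ P.support, C (P.coeff d) * (qd d).map (algebraMap ℚ R), ?_⟩
  have hcomp : (∑ d ∈ P.support, C (P.coeff d) * (qd d).map (algebraMap ℚ R)).comp (X + 1)
      = ∑ d ∈ P.support, (C (P.coeff d) * (qd d).map (algebraMap ℚ R)).comp (X + 1) := by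
    simp only [Polynomial.comp]
    exact eval₂_finset_sum _ _ _ _
  rw [hcomp, ← Finset.sum_sub_distrib]
  have hterm : ∀ d ∈ P.support, (C (P.coeff d) * (qd d).map (algebraMap ℚ R)).comp (X + 1)
      - C (P.coeff d) * (qd d).map (algebraMap ℚ R) = C (P.coeff d) * X ^ d := by
    intro d _
    rw [mul_comp, C_comp, ← mul_sub]
    congr 1
    have hmc : ((qd d).map (algebraMap ℚ R)).comp (X + 1)
        = ((qd d).comp (X + 1)).map (algebraMap ℚ R) := by
      rw [map_comp]
      simp
    rw [hmc, ← Polynomial.map_sub, hqd d]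
    simp
  rw [Finset.sum_congr rfl hterm]
  conv_rhs => rw [← P.sum_C_mul_X_pow_eq]
  rw [Polynomial.sum_def]


open Polynomial



/-- Discrete integration: if the difference in the first variable of `f` and the value at `0`
are polynomial, then `f` is polynomial. -/
lemma isPoly_of_diff {q : ℕ} (f : ℤ → (Fin q → ℤ) → ℤ)
    (hdiff : IsPoly (σ := Fin (q+1)) fun z => f (z 0 + 1) (z ∘ Fin.succ) - f (z 0) (z ∘ Fin.succ))
    (h0 : IsPoly (σ := Fin q) (f 0)) :
    IsPoly (σ := Fin (q+1)) fun z => f (z 0) (z ∘ Fin.succ) := by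
  classical
  obtain ⟨P, hP⟩ := hdiff
  obtain ⟨P₀, hP₀⟩ := h0
  obtain ⟨A, hA⟩ := exists_antideriv (MvPolynomial.finSuccEquiv ℚ q P)
  set Qp : MvPolynomial (Fin (q+1)) ℚ := (MvPolynomial.finSuccEquiv ℚ q).symm A with hQp
  have hQA : MvPolynomial.finSuccEquiv ℚ q Qp = A := by
    rw [hQp]; exact (MvPolynomial.finSuccEquiv ℚ q).apply_symm_apply A
  set F : ℚ → (Fin q → ℤ) → ℚ := fun v y =>
    MvPolynomial.eval (Fin.cons v (fun i => (y i : ℚ))) Qp with hF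
  have hFeval : ∀ (v : ℚ) (y : Fin q → ℤ), F v y
      = Polynomial.eval v (Polynomial.map (MvPolynomial.eval (fun i => (y i : ℚ))) A) := by
    intro v y
    rw [hF]
    simp only
    rw [MvPolynomial.eval_eq_eval_mv_eval', hQA]
  have castcons : ∀ (v : ℤ) (y : Fin q → ℤ),
      (fun i => ((Fin.cons v y : Fin (q+1) → ℤ) i : ℚ)) = Fin.cons (v : ℚ) (fun i => (y i : ℚ)) := by
    intro v y
    funext i
    refine Fin.cases ?_ ?_ i <;> simp
  have hdiffF : ∀ (v : ℤ) (y : Fin q → ℤ),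
      F ((v : ℚ) + 1) y - F (v : ℚ) y = ((f (v + 1) y : ℚ) - (f v y : ℚ)) := by
    intro v y
    set yc := fun i => ((y i : ℚ)) with hyc
    set Ay := Polynomial.map (MvPolynomial.eval yc) A with hAy
    have h1 : F ((v : ℚ) + 1) y = Polynomial.eval (v : ℚ) (Ay.comp (X + 1)) := by
      rw [hFeval, Polynomial.eval_comp]
      simp
      rfl
    have h2 : Ay.comp (X + 1) - Ay
        = Polynomial.map (MvPolynomial.eval yc) (A.comp (X+1) - A) := by
      rw [Polynomial.map_sub, Polynomial.map_comp]
      simp [hAy]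
    rw [h1, hFeval, ← Polynomial.eval_sub, h2, hA]
    have h3 : Polynomial.eval (v:ℚ) (Polynomial.map (MvPolynomial.eval yc)
          (MvPolynomial.finSuccEquiv ℚ q P))
        = MvPolynomial.eval (Fin.cons (v : ℚ) yc) P :=
      (MvPolynomial.eval_eq_eval_mv_eval' yc (v:ℚ) P).symm
    rw [h3, ← castcons, ← hP (Fin.cons v y)]
    have hz0 : (Fin.cons v y : Fin (q+1) → ℤ) 0 = v := rfl
    have hzs : (Fin.cons v y : Fin (q+1) → ℤ) ∘ Fin.succ = y := by
      funext i; simp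
    simp only [hz0, hzs]
    push_cast
    ring
  have main : ∀ (v : ℤ) (y : Fin q → ℤ),
      (f v y : ℚ) = MvPolynomial.eval (fun i => (y i : ℚ)) P₀ + F (v:ℚ) y - F 0 y := by
    intro v y
    induction v using Int.induction_on with
    | zero => rw [← hP₀ y]; push_cast; ring
    | succ k ihk =>
      have := hdiffF k y
      push_cast
      push_cast at ihk this
      linarith
    | pred k ihk =>
      have this1 := hdiffF (-(k:ℤ)-1) y
      have e : (-(k:ℤ)-1+1) = -(k:ℤ) := by ring
      rw [e] at this1
      have e2 : (((-(k:ℤ)-1 : ℤ) : ℚ)) + 1 = -(k:ℚ) := by push_cast; ring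
      rw [e2] at this1
      push_cast at ihk this1 ⊢
      linarith
  -- assemble the polynomial
  refine ⟨MvPolynomial.rename Fin.succ P₀ + Qp
    - MvPolynomial.bind₁ (Fin.cases 0 (fun i => MvPolynomial.X i.succ)) Qp, fun z => ?_⟩
  have e1 : MvPolynomial.eval (fun i => (z i : ℚ)) (MvPolynomial.rename Fin.succ P₀)
      = MvPolynomial.eval (fun i => ((z ∘ Fin.succ) i : ℚ)) P₀ := by
    rw [MvPolynomial.eval_rename]
    rfl
  have e2 : MvPolynomial.eval (fun i => (z i : ℚ)) Qp = F ((z 0 : ℚ)) (z ∘ Fin.succ) := by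
    rw [hF]
    simp only
    have hfe : (fun i => (z i : ℚ))
        = Fin.cons ((z 0 : ℚ)) (fun i => ((z ∘ Fin.succ) i : ℚ)) := by
      funext i
      refine Fin.cases ?_ ?_ i <;> simp
    rw [hfe]
  have e3 : MvPolynomial.eval (fun i => (z i : ℚ))
        (MvPolynomial.bind₁ (Fin.cases 0 (fun i => MvPolynomial.X i.succ)) Qp)
      = F 0 (z ∘ Fin.succ) := by
    have h1 : MvPolynomial.eval (fun i => (z i : ℚ))
          (MvPolynomial.bind₁ (Fin.cases 0 (fun i => MvPolynomial.X i.succ)) Qp)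
        = MvPolynomial.eval (fun i => MvPolynomial.eval (fun j => (z j : ℚ))
            ((Fin.cases 0 (fun i => MvPolynomial.X i.succ) : Fin (q+1) → MvPolynomial (Fin (q+1)) ℚ) i)) Qp :=
      MvPolynomial.eval₂Hom_bind₁ _ _ _ _
    rw [h1, hF]
    simp only
    have hfe : (fun i => MvPolynomial.eval (fun j => (z j : ℚ))
          ((Fin.cases 0 (fun i => MvPolynomial.X i.succ) : Fin (q+1) → MvPolynomial (Fin (q+1)) ℚ) i))
        = Fin.cons (0 : ℚ) (fun i => ((z ∘ Fin.succ) i : ℚ)) := by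
      funext i
      refine Fin.cases ?_ ?_ i
      · simp
      · intro j
        simp
    rw [hfe]
  rw [MvPolynomial.eval_sub, MvPolynomial.eval_add, e1, e2, e3, main (z 0) (z ∘ Fin.succ)]

end AD2




/-- Discrete integration, generic index type. -/
lemma isPoly_of_diff' {ι : Type*} [Fintype ι] (f : ℤ → (ι → ℤ) → ℤ)
    (hdiff : IsPoly (σ := Option ι) fun z => f (z none + 1) (z ∘ some) - f (z none) (z ∘ some))
    (h0 : IsPoly (σ := ι) (f 0)) :
    IsPoly (σ := Option ι) fun z => f (z none) (z ∘ some) := by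
  classical
  set q := Fintype.card ι with hq
  set e : ι ≃ Fin q := Fintype.equivFin ι with he
  set f' : ℤ → (Fin q → ℤ) → ℤ := fun v y => f v (y ∘ e) with hf'
  have key : IsPoly (σ := Fin (q+1)) fun z => f' (z 0) (z ∘ Fin.succ) := by
    apply isPoly_of_diff
    · -- difference
      have hcoord : ∀ o : Option ι, IsPoly (σ := Fin (q+1)) fun z =>
          (Option.elim o (z 0) (fun i => z (e i).succ) : ℤ) := by
        intro o
        cases o with
        | none => exact isPoly_proj 0
        | some i => exact isPoly_proj ((e i).succ)
      refine (hdiff.comp (g := fun z o => Option.elim o (z 0) (fun i => z (e i).succ))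
        (fun o => hcoord o)).congr ?_
      intro z
      rfl
    · exact h0.comp (g := fun (y : Fin q → ℤ) i => y (e i)) (fun i => isPoly_proj (e i)) |>.congr
        (fun y => rfl)
  refine (key.comp (g := fun (z : Option ι → ℤ) j =>
      Fin.cases (z none) (fun i => z (some (e.symm i))) j) ?_).congr ?_
  · intro j
    refine Fin.cases ?_ ?_ j
    · exact isPoly_proj none
    · intro i
      exact isPoly_proj (some (e.symm i))
  · intro z
    set g : Fin (q+1) → ℤ := fun j => Fin.cases (z none) (fun i => z (some (e.symm i))) j with hg
    have hA : g 0 = z none := rfl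
    have hB : ((g ∘ Fin.succ) ∘ e) = z ∘ some := by
      funext i
      simp [hg]
    show f (g 0) ((g ∘ Fin.succ) ∘ e) = f (z none) (z ∘ some)
    rw [hA, hB]

/-- Iterates of a parametrized family of triangular polynomial bijections of `ℤ^q`
are polynomial, jointly in the exponent, the parameters, and the point. -/
lemma iterate_isPoly {q : ℕ} {κ : Type*} [Fintype κ] (F : (κ → ℤ) → Equiv.Perm (Fin q → ℤ))
    (hpoly : ∀ k, IsPoly (σ := κ ⊕ Fin q) fun z => F (z ∘ Sum.inl) (z ∘ Sum.inr) k)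
    (htri : ∀ b x x' (k : Fin q), (∀ l, l < k → x l = x' l)
      → F b x k - x k = F b x' k - x' k) :
    ∀ k : Fin q, IsPoly (σ := Option (κ ⊕ Fin q)) fun z =>
      ((F (fun c => z (some (Sum.inl c))) ^ (z none)) (fun l => z (some (Sum.inr l)))) k := by
  classical
  suffices H : ∀ m : ℕ, ∀ k : Fin q, (k : ℕ) < m → IsPoly (σ := Option (κ ⊕ Fin q)) fun z =>
      ((F (fun c => z (some (Sum.inl c))) ^ (z none)) (fun l => z (some (Sum.inr l)))) k by
    exact fun k => H q k k.isLt
  intro m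
  induction m with
  | zero => exact fun k hk => absurd hk (Nat.not_lt_zero _)
  | succ m ih =>
    intro k hk
    set f : ℤ → ((κ ⊕ Fin q) → ℤ) → ℤ :=
      fun v w => ((F (w ∘ Sum.inl) ^ v) (w ∘ Sum.inr)) k with hf
    have goal_eq : (fun z : Option (κ ⊕ Fin q) → ℤ =>
        ((F (fun c => z (some (Sum.inl c))) ^ (z none)) (fun l => z (some (Sum.inr l)))) k)
        = fun z => f (z none) (z ∘ some) := rfl
    rw [goal_eq]
    apply isPoly_of_diff'
    · -- the difference is polynomial
      -- coordinates fed to F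
      set gc : (Option (κ ⊕ Fin q) → ℤ) → (κ ⊕ Fin q) → ℤ := fun z s =>
        Sum.rec (fun c => z (some (Sum.inl c)))
          (fun l => if l < k then
            ((F (fun c => z (some (Sum.inl c))) ^ (z none)) (fun l' => z (some (Sum.inr l')))) l
            else 0) s with hgc
      have hgcpoly : ∀ s, IsPoly fun z => gc z s := by
        intro s
        cases s with
        | inl c => exact isPoly_proj (some (Sum.inl c))
        | inr l =>
          by_cases hl : l < k
          · have := ih l (lt_of_lt_of_le hl (by exact Nat.lt_succ_iff.mp hk))
            exact this.congr (fun z => by simp [hgc, hl])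
          · exact (isPoly_const 0).congr (fun z => by simp [hgc, hl])
      refine ((hpoly k).comp hgcpoly).congr ?_
      intro z
      set b := fun c => z (some (Sum.inl c)) with hb
      set x := fun l' => z (some (Sum.inr l')) with hx
      set y := (F b ^ (z none)) x with hy
      have h1 : f (z none + 1) (z ∘ some) = F b y k := by
        simp only [hf]
        have : F b ^ (z none + 1) = F b * F b ^ (z none) := by
          rw [add_comm, zpow_add, zpow_one]
        rw [show ((z ∘ some) ∘ Sum.inl) = b from rfl, show ((z ∘ some) ∘ Sum.inr) = x from rfl,
          this]
        rfl
      have h2 : f (z none) (z ∘ some) = y k := rfl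
      have htr := htri b y (fun l => if l < k then y l else 0) k
        (fun l hl => by simp [hl])
      have h3 : gc z ∘ Sum.inl = b := rfl
      have h4 : gc z ∘ Sum.inr = fun l => if l < k then y l else 0 := rfl
      rw [h3, h4, h1, h2]
      have h6 : (fun l => if l < k then y l else 0) k = 0 := by simp
      linarith [htr, h6]
    · -- value at 0
      refine (isPoly_proj (σ := κ ⊕ Fin q) (Sum.inr k)).congr ?_
      intro w
      simp only [hf]
      rw [zpow_zero]
      rfl


section Main

lemma prodPow_succ {Γ : Type*} [Group Γ] (n : ℕ) (g : Fin (n+1) → Γ) (e : Fin (n+1) → ℤ) :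
    prodPow (n+1) g e = g 0 ^ e 0 * prodPow n (fun k => g k.succ) (fun k => e k.succ) := by
  rw [prodPow, List.finRange_succ, List.map_cons, List.prod_cons, List.map_map]
  rfl

lemma suppGe_one_cons (n : ℕ) (w : Fin n → ℤ) : SuppGe (n+1) 1 (Fin.cons 0 w) := by
  intro k hk
  have h0 : (k : ℕ) = 0 := by omega
  have hk0 : k = 0 := by
    apply Fin.ext
    simp [h0]
  subst hk0
  rfl

/-- Hall's theorem: the coordinates of the transported multiplication are polynomial. -/
theorem mu_isPoly : ∀ (n : ℕ) (t : Fin n → Fin n → Fin n → ℤ)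
    (hN : Function.Bijective (N n t)) (k : Fin n),
    IsPoly (σ := Fin n ⊕ Fin n) fun z => mu n t hN (z ∘ Sum.inl) (z ∘ Sum.inr) k := by
  intro n
  induction n with
  | zero => intro t hN k; exact absurd k.isLt (by omega)
  | succ n ihn =>
    intro t hN k
    classical
    set t' : Fin n → Fin n → Fin n → ℤ := fun i j k => t i.succ j.succ k.succ with ht'
    -- tail reindexing
    have tail_cons : ∀ i j : Fin n, tail (n+1) t i.succ j.succ
        = Fin.cons 0 (fun k => if j < k then t' i j k else 0) := by
      intro i j
      funext m
      refine Fin.cases ?_ ?_ m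
      · have : ¬ (j.succ < (0 : Fin (n+1))) := by simp
        simp [tail, this]
      · intro p
        by_cases hp : j < p
        · have : j.succ < p.succ := by rwa [Fin.succ_lt_succ_iff]
          simp [tail, hp, this, ht']
        · have : ¬ (j.succ < p.succ) := by rwa [Fin.succ_lt_succ_iff]
          simp [tail, hp, this]
    -- N on cons
    have hNcons : ∀ w : Fin n → ℤ, N (n+1) t (Fin.cons 0 w)
        = prodPow n (fun k => a (n+1) t k.succ) w := by
      intro w
      rw [N, prodPow_succ]
      simp only [Fin.cons_zero, Fin.cons_succ, zpow_zero, one_mul]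
    have hdecomp : ∀ x : Fin (n+1) → ℤ, N (n+1) t x
        = a (n+1) t 0 ^ (x 0) * N (n+1) t (Fin.cons 0 (x ∘ Fin.succ)) := by
      intro x
      rw [N, prodPow_succ, hNcons]
      rfl
    -- the homomorphism Φ
    have hrels : ∀ r ∈ rels n t', FreeGroup.lift (fun k => a (n+1) t k.succ) r = 1 := by
      rintro r ⟨i, j, hij, rfl⟩
      rw [map_mul, map_inv, map_mul, map_mul, map_mul]
      have hlift : ∀ m : Fin n, FreeGroup.lift (fun k => a (n+1) t k.succ) (FreeGroup.of m)
          = a (n+1) t m.succ := fun m => FreeGroup.lift_apply_of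
      have hprod : FreeGroup.lift (fun k => a (n+1) t k.succ)
            (prodPow n FreeGroup.of (fun k => if j < k then t' i j k else 0))
          = N (n+1) t (tail (n+1) t i.succ j.succ) := by
        rw [hom_prodPow]
        have : (fun k : Fin n => FreeGroup.lift (fun k => a (n+1) t k.succ) (FreeGroup.of k))
            = fun k : Fin n => a (n+1) t k.succ := by
          funext m; exact FreeGroup.lift_apply_of
        rw [this, tail_cons i j, hNcons]
      rw [hprod, hlift, hlift]
      have hrel := rel (n+1) t i.succ j.succ (by rwa [Fin.succ_lt_succ_iff])
      rw [inv_mul_eq_one, hrel]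
    set Φ : G n t' →* G (n+1) t := PresentedGroup.toGroup hrels with hΦ
    have hΦof : ∀ m : Fin n, Φ (a n t' m) = a (n+1) t m.succ := by
      intro m
      exact PresentedGroup.toGroup.of hrels
    have hΦN : ∀ x' : Fin n → ℤ, Φ (N n t' x') = N (n+1) t (Fin.cons 0 x') := by
      intro x'
      rw [N, hom_prodPow, hNcons]
      have e : (fun k : Fin n => Φ (a n t' k)) = fun k => a (n+1) t k.succ :=
        funext fun m => hΦof m
      rw [e]
    -- consistency of t'
    have hN' : Function.Bijective (N n t') := by
      constructor
      · intro x y h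
        have h2 : N (n+1) t (Fin.cons 0 x) = N (n+1) t (Fin.cons 0 y) := by
          rw [← hΦN, ← hΦN, h]
        have h3 := hN.1 h2
        funext i
        have := congrFun h3 i.succ
        simpa using this
      · exact N_surj n t'
    -- the twisting family
    set cvec : Fin n → Fin n → ℤ := fun c l => if c < l then t 0 c.succ l.succ else 0 with hcvec
    set b : Fin n → Fin n → ℤ := fun c => sing n c 1 + cvec c with hb_def
    have hb : ∀ c : Fin n, SuppGe n (c : ℕ) (b c) := by
      intro c l hl
      have h1 : l ≠ c := by intro h; subst h; omega
      have h2 : ¬ c < l := by rw [Fin.lt_def]; omega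
      simp [hb_def, sing, hcvec, h1, h2]
    have hb1 : ∀ c : Fin n, b c c = 1 := by
      intro c
      simp [hb_def, sing, hcvec]
    have hconsb : ∀ c : Fin n, Fin.cons (0:ℤ) (b c)
        = sing (n+1) c.succ 1 + tail (n+1) t 0 c.succ := by
      intro c
      funext m
      refine Fin.cases ?_ ?_ m
      · have h1 : (0 : Fin (n+1)) ≠ c.succ := (Fin.succ_ne_zero c).symm
        have h2 : ¬ (c.succ < (0 : Fin (n+1))) := by simp
        simp [sing, tail, h1, h2]
      · intro p
        have h1 : (p.succ = c.succ) ↔ (p = c) := Fin.succ_inj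
        have h2 : (c.succ < p.succ) ↔ (c < p) := Fin.succ_lt_succ_iff
        by_cases hpc : p = c
        · subst hpc
          have h3 : ¬ (p < p) := lt_irrefl p
          simp [hb_def, sing, hcvec, tail, h3]
        · by_cases hcp : c < p
          · simp [hb_def, sing, hcvec, tail, hpc, hcp, h1, h2]
          · simp [hb_def, sing, hcvec, tail, hpc, hcp, h1, h2]
    have hNconsb : ∀ c : Fin n, N (n+1) t (Fin.cons 0 (b c))
        = a (n+1) t c.succ * N (n+1) t (tail (n+1) t 0 c.succ) := by
      intro c
      rw [hconsb c, N_add_split (n+1) t ((c.succ : ℕ)+1) _ _ (suppLt_sing (n+1) c.succ 1)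
        (suppGe_tail (n+1) t 0 c.succ), N_sing, zpow_one]
    -- conjugation formula
    set dl : (Fin n → ℤ) → Fin n → ℤ := fun x => fold n t' hN' b (List.finRange n) x with hdl
    have econj : ∀ g : G (n+1) t, (MulAut.conj ((a (n+1) t 0)⁻¹)).toMonoidHom g
        = (a (n+1) t 0)⁻¹ * g * a (n+1) t 0 := by
      intro g
      simp [MulAut.conj_apply]
    have hconj : ∀ x' : Fin n → ℤ,
        (a (n+1) t 0)⁻¹ * N (n+1) t (Fin.cons 0 x') * a (n+1) t 0
          = N (n+1) t (Fin.cons 0 (dl x')) := by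
      intro x'
      have h1 : (a (n+1) t 0)⁻¹ * N (n+1) t (Fin.cons 0 x') * a (n+1) t 0
          = prodPow n (fun m => (a (n+1) t 0)⁻¹ * a (n+1) t m.succ * a (n+1) t 0) x' := by
        rw [hNcons, ← econj, hom_prodPow]
        have e2 : (fun m : Fin n => (MulAut.conj ((a (n+1) t 0)⁻¹)).toMonoidHom (a (n+1) t m.succ))
            = fun m : Fin n => (a (n+1) t 0)⁻¹ * a (n+1) t m.succ * a (n+1) t 0 := by
          funext m
          rw [econj]
        rw [e2]
      have h2 : (fun m : Fin n => (a (n+1) t 0)⁻¹ * a (n+1) t m.succ * a (n+1) t 0)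
          = fun m : Fin n => N (n+1) t (Fin.cons 0 (b m)) := by
        funext m
        rw [conj1 (n+1) t (Fin.succ_pos m), hNconsb m]
      have h3 : prodPow n (fun m => N (n+1) t (Fin.cons 0 (b m))) x'
          = N (n+1) t (Fin.cons 0 (dl x')) := by
        have e1 : (fun m : Fin n => N (n+1) t (Fin.cons 0 (b m)))
            = fun m : Fin n => Φ (N n t' (b m)) := by
          funext m
          rw [hΦN]
        have e3 : prodPow n (fun m => N n t' (b m)) x' = N n t' (dl x') :=
          (fold_N n t' hN' b (List.finRange n) x').symm
        rw [e1, ← hom_prodPow, e3, hΦN]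
      rw [h1, h2, h3]
    -- the permutation δ and its inverse
    have hNconsinj : ∀ x y : Fin n → ℤ,
        N (n+1) t (Fin.cons 0 x) = N (n+1) t (Fin.cons 0 y) → x = y := by
      intro x y h
      have h3 := hN.1 h
      funext i
      have := congrFun h3 i.succ
      simpa using this
    set ep : (Fin n → ℤ) → Fin n → ℤ := fun w =>
      ((Equiv.ofBijective (N (n+1) t) hN).symm
        (a (n+1) t 0 * N (n+1) t (Fin.cons 0 w) * (a (n+1) t 0)⁻¹)) ∘ Fin.succ with hep
    have hepeq : ∀ w : Fin n → ℤ, N (n+1) t (Fin.cons 0 (ep w))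
        = a (n+1) t 0 * N (n+1) t (Fin.cons 0 w) * (a (n+1) t 0)⁻¹ := by
      intro w
      haveI : (H (n+1) t 1).Normal := H_normal (n+1) t 1
      have hmem : a (n+1) t 0 * N (n+1) t (Fin.cons 0 w) * (a (n+1) t 0)⁻¹ ∈ H (n+1) t 1 :=
        this.conj_mem _ (N_mem_H (n+1) t (suppGe_one_cons n w)) _
      obtain ⟨z, hz, hzeq⟩ := exists_nf (n+1) t 1 _ hmem
      have hzcons : z = Fin.cons 0 (z ∘ Fin.succ) := by
        funext i
        refine Fin.cases ?_ ?_ i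
        · rw [Fin.cons_zero]
          exact hz 0 (by simp)
        · intro p
          rw [Fin.cons_succ]
          rfl
      have hsymm : (Equiv.ofBijective (N (n+1) t) hN).symm
          (a (n+1) t 0 * N (n+1) t (Fin.cons 0 w) * (a (n+1) t 0)⁻¹) = z := by
        rw [Equiv.symm_apply_eq]
        exact hzeq.symm
      have : ep w = z ∘ Fin.succ := by rw [hep]; simp only; rw [hsymm]
      rw [this, ← hzcons, hzeq]
    set ed : Equiv.Perm (Fin n → ℤ) :=
      { toFun := dl
        invFun := ep
        left_inv := by
          intro x'
          apply hNconsinj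
          rw [hepeq, ← hconj]
          group
        right_inv := by
          intro w
          apply hNconsinj
          rw [← hconj, hepeq]
          group } with hed
    have hconj_pow : ∀ (v : ℤ) (x' : Fin n → ℤ),
        (a (n+1) t 0) ^ (-v) * N (n+1) t (Fin.cons 0 x') * (a (n+1) t 0) ^ v
          = N (n+1) t (Fin.cons 0 ((ed ^ v) x')) := by
      intro v
      induction v using Int.induction_on with
      | zero => intro x'; simp
      | succ v ih =>
        intro x'
        have hsplit : (a (n+1) t 0) ^ (-(v+1) : ℤ)
            = (a (n+1) t 0)⁻¹ * (a (n+1) t 0) ^ (-v : ℤ) := by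
          rw [← zpow_neg_one, ← zpow_add]
          congr 1
          ring
        have hsplit2 : (a (n+1) t 0) ^ ((v+1) : ℤ)
            = (a (n+1) t 0) ^ (v : ℤ) * a (n+1) t 0 := zpow_add_one _ _
        have hpow : (ed ^ ((v:ℤ)+1)) x' = dl ((ed ^ (v:ℤ)) x') := by
          rw [show (ed ^ ((v:ℤ)+1)) = ed * ed ^ (v:ℤ) by rw [add_comm, zpow_add, zpow_one]]
          rfl
        calc (a (n+1) t 0) ^ (-(v+1) : ℤ) * N (n+1) t (Fin.cons 0 x') * (a (n+1) t 0) ^ ((v:ℤ)+1)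
            = (a (n+1) t 0)⁻¹ * ((a (n+1) t 0) ^ (-v : ℤ) * N (n+1) t (Fin.cons 0 x')
              * (a (n+1) t 0) ^ (v : ℤ)) * a (n+1) t 0 := by
              rw [hsplit, hsplit2]
              group
          _ = (a (n+1) t 0)⁻¹ * N (n+1) t (Fin.cons 0 ((ed ^ (v:ℤ)) x')) * a (n+1) t 0 := by
              rw [ih x']
          _ = N (n+1) t (Fin.cons 0 (dl ((ed ^ (v:ℤ)) x'))) := hconj _
          _ = N (n+1) t (Fin.cons 0 ((ed ^ ((v:ℤ)+1)) x')) := by rw [hpow]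
      | pred v ih =>
        intro x'
        have hsplit : (a (n+1) t 0) ^ (-(-(v:ℤ)-1) : ℤ)
            = a (n+1) t 0 * (a (n+1) t 0) ^ ((v:ℤ)) := by
          rw [show (-(-(v:ℤ)-1) : ℤ) = 1 + (v:ℤ) by ring, zpow_one_add]
        have hsplit2 : (a (n+1) t 0) ^ ((-(v:ℤ)-1) : ℤ)
            = (a (n+1) t 0) ^ (-(v:ℤ)) * (a (n+1) t 0)⁻¹ := zpow_sub_one _ _
        have hpow : (ed ^ (-(v:ℤ)-1)) x' = ep ((ed ^ (-(v:ℤ))) x') := by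
          rw [show (ed ^ (-(v:ℤ)-1)) = ed⁻¹ * ed ^ (-(v:ℤ)) by
            rw [sub_eq_add_neg, add_comm, zpow_add, zpow_neg_one]]
          rfl
        calc (a (n+1) t 0) ^ (-(-(v:ℤ)-1)) * N (n+1) t (Fin.cons 0 x')
              * (a (n+1) t 0) ^ (-(v:ℤ)-1)
            = a (n+1) t 0 * ((a (n+1) t 0) ^ (-(-(v:ℤ))) * N (n+1) t (Fin.cons 0 x')
              * (a (n+1) t 0) ^ (-(v:ℤ))) * (a (n+1) t 0)⁻¹ := by
              rw [hsplit, hsplit2]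
              have : (-(-(v:ℤ))) = (v:ℤ) := by ring
              rw [this]
              group
          _ = a (n+1) t 0 * N (n+1) t (Fin.cons 0 ((ed ^ (-(v:ℤ))) x')) * (a (n+1) t 0)⁻¹ := by
              rw [ih x']
          _ = N (n+1) t (Fin.cons 0 (ep ((ed ^ (-(v:ℤ))) x'))) := (hepeq _).symm
          _ = N (n+1) t (Fin.cons 0 ((ed ^ (-(v:ℤ)-1)) x')) := by rw [hpow]
    -- multiplication recursion
    have mu_succ : ∀ x y : Fin (n+1) → ℤ, mu (n+1) t hN x y
        = Fin.cons (x 0 + y 0)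
            (mu n t' hN' ((ed ^ (y 0)) (x ∘ Fin.succ)) (y ∘ Fin.succ)) := by
      intro x y
      apply mu_unique
      have e1 : N (n+1) t (Fin.cons (x 0 + y 0)
            (mu n t' hN' ((ed ^ (y 0)) (x ∘ Fin.succ)) (y ∘ Fin.succ)))
          = a (n+1) t 0 ^ (x 0 + y 0) * N (n+1) t (Fin.cons 0
            (mu n t' hN' ((ed ^ (y 0)) (x ∘ Fin.succ)) (y ∘ Fin.succ))) := by
        rw [hdecomp]
        have cs : (Fin.cons (x 0 + y 0)
            (mu n t' hN' ((ed ^ (y 0)) (x ∘ Fin.succ)) (y ∘ Fin.succ)) : Fin (n+1) → ℤ) ∘ Fin.succ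
            = mu n t' hN' ((ed ^ (y 0)) (x ∘ Fin.succ)) (y ∘ Fin.succ) := by
          funext i
          simp
        rw [cs, Fin.cons_zero]
      have e2 : N (n+1) t (Fin.cons 0
            (mu n t' hN' ((ed ^ (y 0)) (x ∘ Fin.succ)) (y ∘ Fin.succ)))
          = N (n+1) t (Fin.cons 0 ((ed ^ (y 0)) (x ∘ Fin.succ)))
            * N (n+1) t (Fin.cons 0 (y ∘ Fin.succ)) := by
        rw [← hΦN, ← hΦN, ← hΦN, ← map_mul, N_mu]
      rw [e1, e2, ← hconj_pow (y 0) (x ∘ Fin.succ)]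
      rw [hdecomp x, hdecomp y]
      rw [zpow_add]
      group
    -- polynomiality of the fold coordinates
    have hLpoly : ∀ k : Fin n, IsPoly (σ := Fin n ⊕ Fin n) fun z =>
        (Lperm n t' hN' (z ∘ Sum.inl)) (z ∘ Sum.inr) k := by
      intro k
      exact (ihn t' hN' k).congr (fun z => rfl)
    have hLtri : ∀ (bb x x' : Fin n → ℤ) (k : Fin n), (∀ l, l < k → x l = x' l) →
        (Lperm n t' hN' bb) x k - x k = (Lperm n t' hN' bb) x' k - x' k := by
      intro bb x x' k h
      exact mu_tri n t' hN' bb x x' k h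
    have hiter := iterate_isPoly (q := n) (κ := Fin n) (Lperm n t' hN') hLpoly hLtri
    have hpw_poly : ∀ (c : Fin n) (l : Fin n),
        IsPoly (σ := Fin n) fun x => pw n t' hN' (b c) (x c) l := by
      intro c l
      refine ((hiter l).comp (g := fun (x : Fin n → ℤ) (o : Option (Fin n ⊕ Fin n)) =>
        Option.rec (x c) (fun s => Sum.rec (fun c' => b c c') (fun _ => 0) s) o) ?_).congr ?_
      · intro o
        cases o with
        | none => exact isPoly_proj c
        | some s =>
          cases s with
          | inl c' => exact isPoly_const (b c c')
          | inr l' => exact isPoly_const 0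
      · intro x
        rfl
    have hfold_poly : ∀ (lst : List (Fin n)) (l : Fin n),
        IsPoly (σ := Fin n) fun x => fold n t' hN' b lst x l := by
      intro lst
      induction lst with
      | nil => intro l; exact isPoly_const 0
      | cons c ll ih =>
        intro l
        refine ((ihn t' hN' l).comp (g := fun (x : Fin n → ℤ) (s : Fin n ⊕ Fin n) =>
          Sum.rec (fun l' => pw n t' hN' (b c) (x c) l')
            (fun l' => fold n t' hN' b ll x l') s) ?_).congr ?_
        · intro s
          cases s with
          | inl l' => exact hpw_poly c l'
          | inr l' => exact ih l'
        · intro x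
          rfl
    -- polynomiality of iterates of ed
    haveI : Fintype (Fin 0) := inferInstance
    have hedpoly : ∀ l : Fin n, IsPoly (σ := Fin 0 ⊕ Fin n) fun z =>
        ((fun _ : Fin 0 → ℤ => ed) (z ∘ Sum.inl)) (z ∘ Sum.inr) l := by
      intro l
      refine ((hfold_poly (List.finRange n) l).comp
        (g := fun (z : (Fin 0 ⊕ Fin n) → ℤ) (m : Fin n) => z (Sum.inr m)) ?_).congr ?_
      · intro m
        exact isPoly_proj (Sum.inr m)
      · intro z
        rfl
    have hedtri : ∀ (bb : Fin 0 → ℤ) (x x' : Fin n → ℤ) (l : Fin n),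
        (∀ p, p < l → x p = x' p) → ed x l - x l = ed x' l - x' l := by
      intro bb x x' l h
      have := fold_drop_tri n t' hN' b hb hb1 l (l : ℕ) 0 (by omega) x x' h
      exact this
    have hedit := iterate_isPoly (q := n) (κ := Fin 0) (fun _ => ed) hedpoly hedtri
    -- final assembly
    refine Fin.cases ?_ ?_ k
    · -- coordinate 0
      refine ((isPoly_proj (σ := Fin (n+1) ⊕ Fin (n+1)) (Sum.inl 0)).add
        (isPoly_proj (Sum.inr 0))).congr ?_
      intro z
      rw [mu_succ]
      rw [Fin.cons_zero]
      rfl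
    · -- coordinate p.succ
      intro p
      refine ((ihn t' hN' p).comp (g := fun (z : (Fin (n+1) ⊕ Fin (n+1)) → ℤ) (s : Fin n ⊕ Fin n) =>
        Sum.rec (fun l => ((ed ^ (z (Sum.inr 0))) (fun m => z (Sum.inl m.succ))) l)
          (fun l => z (Sum.inr l.succ)) s) ?_).congr ?_
      · intro s
        cases s with
        | inl l =>
          refine ((hedit l).comp (g := fun (z : (Fin (n+1) ⊕ Fin (n+1)) → ℤ)
            (o : Option (Fin 0 ⊕ Fin n)) =>
            Option.rec (z (Sum.inr 0))
              (fun s' => Sum.rec (fun c => 0) (fun m => z (Sum.inl m.succ)) s') o) ?_).congr ?_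
          · intro o
            cases o with
            | none => exact isPoly_proj (Sum.inr 0)
            | some s' =>
              cases s' with
              | inl c => exact isPoly_const 0
              | inr m => exact isPoly_proj (Sum.inl m.succ)
          · intro z
            rfl
        | inr l => exact isPoly_proj (Sum.inr l.succ)
      · intro z
        rw [mu_succ]
        rw [Fin.cons_succ]
        rfl

end Main


/-- Conjugation polynomials: if `G(t)` is consistent, then for all `1 ≤ i < j ≤ n` there
exist rational polynomials `R_{i,j,k}` (for `j < k ≤ n`) in two variables `u, v` that take
integer values on integer arguments and satisfy
`a_j^u · a_i^v = a_i^v · a_j^u · a_{j+1}^{R_{i,j,j+1}(u,v)} ⋯ a_n^{R_{i,j,n}(u,v)}`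
in `G(t)` for all `u, v ∈ ℤ`. -/
theorem exists_conjugation_polynomials (n : ℕ) (t : Fin n → Fin n → Fin n → ℤ)
    (hN : Function.Bijective (N n t)) :
    ∀ i j : Fin n, i < j →
      ∃ R : Fin n → MvPolynomial (Fin 2) ℚ,
        ∀ u v : ℤ, ∃ r : Fin n → ℤ,
          (∀ k : Fin n, j < k →
            (r k : ℚ) = MvPolynomial.eval ![(u : ℚ), (v : ℚ)] (R k)) ∧
          a n t j ^ u * a n t i ^ v =
            a n t i ^ v * a n t j ^ u *
              prodPow n (a n t) (fun k => if j < k then r k else 0) := by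

  intro i j hij
  classical
  -- polynomiality of the relevant multiplication coordinates
  have hF : ∀ k : Fin n, IsPoly (σ := Fin 2) fun z : Fin 2 → ℤ =>
      mu n t hN (sing n j (z 0)) (sing n i (z 1)) k := by
    intro k
    refine ((mu_isPoly n t hN k).comp (g := fun (z : Fin 2 → ℤ) (s : Fin n ⊕ Fin n) =>
      Sum.rec (fun l => sing n j (z 0) l) (fun l => sing n i (z 1) l) s) ?_).congr ?_
    · intro s
      cases s with
      | inl l =>
        by_cases hlj : l = j
        · exact (isPoly_proj (0 : Fin 2)).congr (fun z => by simp [sing, hlj])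
        · exact (isPoly_const 0).congr (fun z => by simp [sing, hlj])
      | inr l =>
        by_cases hli : l = i
        · exact (isPoly_proj (1 : Fin 2)).congr (fun z => by simp [sing, hli])
        · exact (isPoly_const 0).congr (fun z => by simp [sing, hli])
    · intro z
      rfl
  choose R hR using hF
  refine ⟨R, ?_⟩
  intro u v
  -- the commutator lies in H (j+1)
  haveI : (H n t ((j : ℕ)+1)).Normal := H_normal n t _
  set q := QuotientGroup.mk' (H n t ((j : ℕ)+1)) with hq
  have hτ : q (N n t (tail n t i j)) = 1 := by
    rw [hq, QuotientGroup.mk'_apply, QuotientGroup.eq_one_iff]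
    exact N_mem_H n t (suppGe_tail n t i j)
  have hcomm : Commute (q (a n t j)) (q (a n t i)) := by
    have := congrArg q (rel n t i j hij)
    rw [map_mul, map_mul, map_mul, hτ, mul_one] at this
    exact this
  have hcommp : Commute (q (a n t j) ^ u) (q (a n t i) ^ v) := hcomm.zpow_zpow u v
  have hqeq : q (a n t i ^ v * a n t j ^ u) = q (a n t j ^ u * a n t i ^ v) := by
    rw [map_mul, map_mul, map_zpow, map_zpow]
    exact (hcommp.eq).symm
  have hmem : (a n t i ^ v * a n t j ^ u)⁻¹ * (a n t j ^ u * a n t i ^ v)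
      ∈ H n t ((j : ℕ)+1) := by
    rw [hq] at hqeq
    simp only [QuotientGroup.mk'_apply] at hqeq
    rwa [QuotientGroup.eq] at hqeq
  obtain ⟨z, hz, hzeq⟩ := exists_nf n t ((j : ℕ)+1) _ hmem
  have heq : a n t j ^ u * a n t i ^ v = a n t i ^ v * a n t j ^ u * N n t z := by
    rw [hzeq]
    group
  refine ⟨z, ?_, ?_⟩
  · -- polynomial values
    intro k hk
    -- identify z k with the multiplication coordinate
    have hsum : N n t (sing n i v + (sing n j u + z)) = N n t (mu n t hN (sing n j u) (sing n i v)) := by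
      have h1 : N n t (sing n i v + (sing n j u + z))
          = N n t (sing n i v) * N n t (sing n j u + z) := by
        apply N_add_split n t ((i : ℕ)+1) _ _ (suppLt_sing n i v)
        intro l hl
        have hji : (i : ℕ) + 1 ≤ (j : ℕ) := by
          have := hij
          rw [Fin.lt_def] at this
          omega
        have h2 : sing n j u l = 0 := suppGe_sing n ((i:ℕ)+1) j u hji l hl
        have h3 : z l = 0 := hz l (by omega)
        simp [h2, h3]
      have h2 : N n t (sing n j u + z) = N n t (sing n j u) * N n t z :=
        N_add_split n t ((j : ℕ)+1) _ _ (suppLt_sing n j u) hz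
      rw [h1, h2, N_sing, N_sing, N_mu, N_sing, N_sing, heq]
      group
    have hw := hN.1 hsum
    have hzk : z k = mu n t hN (sing n j u) (sing n i v) k := by
      have := congrFun hw k
      have hki : sing n i v k = 0 := by
        have : k ≠ i := by
          intro h; subst h
          rw [Fin.lt_def] at hij hk
          omega
        simp [sing, this]
      have hkj : sing n j u k = 0 := by
        have : k ≠ j := by
          intro h; subst h
          exact lt_irrefl _ hk
        simp [sing, this]
      have := congrFun hw k
      simp only [Pi.add_apply, hki, hkj, zero_add] at this
      exact this
    rw [hzk]
    have := hR k ![u, v]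
    simp only [Matrix.cons_val_zero, Matrix.cons_val_one, Matrix.head_cons] at this
    rw [this]
    have hfe : (fun m => ((![u, v] : Fin 2 → ℤ) m : ℚ)) = ![(u:ℚ), (v:ℚ)] := by
      funext m
      fin_cases m <;> simp
    rw [hfe]
  · -- the group equation
    have hvec : (fun k => if j < k then z k else 0) = z := by
      funext k
      by_cases hk : j < k
      · simp [hk]
      · have : (k : ℕ) < (j : ℕ) + 1 := by
          rw [Fin.lt_def] at hk
          omega
        simp [hk, hz k this]
    rw [hvec]
    exact heq

end HallPoly
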